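/- arXiv:1401.6894 — 8 statements merged into one kernel-verified Lean document; each statement's English description precedes it below -/
import Mathlib

section
/- The number of self-avoiding paths from (0,...,0) to (1,...,1) on the L-hypercube with exactly one backstep (length L+2) equals L! * L(L-1)(L-2)/6. -/
/-- Two vertices of the hypercube are adjacent if they differ in exactly one
coordinate. -/
def HypercubeAdj {L : ℕ} (u v : Fin L → Bool) : Prop := ∃! i, u i ≠ v i

/-- `p` is a self-avoiding path of length `n` on the `L`-hypercube. -/
def IsSAPath {L : ℕ} (n : ℕ) (p : Fin (n+1) → Fin L → Bool) : Prop :=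
  Function.Injective p ∧ ∀ i : Fin n, HypercubeAdj (p i.castSucc) (p i.succ)

namespace Stmt3Aux

variable {L : ℕ}

/-- number of steps `s < t` flipping coordinate `j` -/
def cnt (f : Fin (L+2) → Fin L) (j : Fin L) (t : ℕ) : ℕ :=
  (Finset.univ.filter fun s : Fin (L+2) => s.val < t ∧ f s = j).card

/-- total number of flips of coordinate `j` -/
def Nf (f : Fin (L+2) → Fin L) (j : Fin L) : ℕ :=
  (Finset.univ.filter fun s : Fin (L+2) => f s = j).card

/-- the path determined by a flip word -/
def pathOf (f : Fin (L+2) → Fin L) : Fin (L+2+1) → Fin L → Bool :=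
  fun t j => decide (Odd (cnt f j t.val))

/-- the conditions on a flip word -/
def Qf (f : Fin (L+2) → Fin L) : Prop :=
  (∀ j, Odd (Nf f j)) ∧ ∀ (s : ℕ) (h : s + 1 < L + 2), f ⟨s, by omega⟩ ≠ f ⟨s+1, h⟩

lemma cnt_zero (f : Fin (L+2) → Fin L) (j : Fin L) : cnt f j 0 = 0 := by
  simp [cnt]

lemma cnt_succ (f : Fin (L+2) → Fin L) (j : Fin L) {t : ℕ} (h : t < L+2) :
    cnt f j (t+1) = cnt f j t + if f ⟨t, h⟩ = j then 1 else 0 := by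
  unfold cnt
  have hsplit : (Finset.univ.filter fun s : Fin (L+2) => s.val < t+1 ∧ f s = j)
      = (Finset.univ.filter fun s : Fin (L+2) => s.val < t ∧ f s = j)
        ∪ (Finset.univ.filter fun s : Fin (L+2) => s = ⟨t, h⟩ ∧ f s = j) := by
    ext s
    simp only [Finset.mem_filter, Finset.mem_union, Finset.mem_univ, true_and, Fin.ext_iff]
    constructor
    · rintro ⟨hs, hj⟩
      rcases Nat.lt_or_ge s.val t with h' | h'
      · exact Or.inl ⟨h', hj⟩
      · exact Or.inr ⟨by omega, hj⟩
    · rintro (⟨hs, hj⟩ | ⟨hs, hj⟩)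
      · exact ⟨by omega, hj⟩
      · exact ⟨by omega, hj⟩
  rw [hsplit, Finset.card_union_of_disjoint]
  · congr 1
    split_ifs with hfj
    · rw [Finset.card_eq_one]
      refine ⟨⟨t, h⟩, ?_⟩
      ext s
      simp only [Finset.mem_filter, Finset.mem_univ, true_and, Finset.mem_singleton]
      constructor
      · rintro ⟨h1, _⟩; exact h1
      · rintro rfl; exact ⟨rfl, hfj⟩
    · rw [Finset.card_eq_zero]
      ext s
      simp only [Finset.mem_filter, Finset.mem_univ, true_and, Finset.notMem_empty, iff_false,
        not_and]
      rintro rfl; exact hfj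
  · rw [Finset.disjoint_left]
    intro s h1 h2
    simp only [Finset.mem_filter, Fin.ext_iff] at h1 h2
    omega

lemma cnt_top (f : Fin (L+2) → Fin L) (j : Fin L) : cnt f j (L+2) = Nf f j := by
  unfold cnt Nf
  congr 1
  apply Finset.filter_congr
  intro s _
  simp [s.isLt]

lemma sum_Nf (f : Fin (L+2) → Fin L) : ∑ j, Nf f j = L + 2 := by
  have := Finset.card_eq_sum_card_fiberwise
    (f := f) (s := Finset.univ) (t := Finset.univ) (fun x _ => Finset.mem_univ _)
  simp only [Finset.card_univ, Fintype.card_fin] at this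
  exact (this.symm : _)

/-- if all values are at least one and the sum equals the cardinality,
then all values are one -/
lemma all_one {α : Type*} [DecidableEq α] {s : Finset α} {g : α → ℕ}
    (h1 : ∀ x ∈ s, 1 ≤ g x) (h2 : ∑ x ∈ s, g x = s.card) : ∀ x ∈ s, g x = 1 := by
  intro x hx
  by_contra hne
  have h2x : 2 ≤ g x := by have := h1 x hx; omega
  have hsum := Finset.sum_erase_add s g hx
  have hge : s.card - 1 ≤ ∑ y ∈ s.erase x, g y := by
    calc s.card - 1 = (s.erase x).card := (Finset.card_erase_of_mem hx).symm
      _ = ∑ y ∈ s.erase x, 1 := (Finset.card_eq_sum_ones _)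
      _ ≤ ∑ y ∈ s.erase x, g y :=
          Finset.sum_le_sum (fun y hy => h1 y (Finset.mem_of_mem_erase hy))
  have hcard : 1 ≤ s.card := Finset.card_pos.2 ⟨x, hx⟩
  omega

lemma exists_repeat {f : Fin (L+2) → Fin L} (hf : ∀ j, Odd (Nf f j)) :
    ∃ r, Nf f r = 3 ∧ ∀ j, j ≠ r → Nf f j = 1 := by
  have h1 : ∀ j, 1 ≤ Nf f j := by intro j; obtain ⟨k, hk⟩ := hf j; omega
  have hsum := sum_Nf f
  have hcardL : (Finset.univ : Finset (Fin L)).card = L := Finset.card_fin L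
  have hex : ∃ r, 2 ≤ Nf f r := by
    by_contra hno
    push_neg at hno
    have : ∑ j, Nf f j ≤ ∑ _j : Fin L, 1 :=
      Finset.sum_le_sum (fun j _ => by have := hno j; omega)
    simp only [Finset.sum_const, smul_eq_mul, mul_one, hcardL] at this
    omega
  obtain ⟨r, hr⟩ := hex
  have hr3 : 3 ≤ Nf f r := by obtain ⟨k, hk⟩ := hf r; omega
  have hA := Finset.sum_erase_add Finset.univ (Nf f) (Finset.mem_univ r)
  have hce : (Finset.univ.erase r).card = L - 1 := by
    rw [Finset.card_erase_of_mem (Finset.mem_univ r), hcardL]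
  have hB : (Finset.univ.erase r).card ≤ ∑ j ∈ Finset.univ.erase r, Nf f j := by
    calc (Finset.univ.erase r).card = ∑ _j ∈ Finset.univ.erase r, 1 :=
          Finset.card_eq_sum_ones _
      _ ≤ _ := Finset.sum_le_sum (fun y _ => h1 y)
  have hL1 : 1 ≤ L := by
    by_contra hc
    interval_cases L
    exact absurd r.isLt (by omega)
  have hNr : Nf f r = 3 := by omega
  refine ⟨r, hNr, fun j hj => ?_⟩
  refine all_one (fun x _ => h1 x) ?_ j (Finset.mem_erase.2 ⟨hj, Finset.mem_univ j⟩)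
  omega

def icnt (f : Fin (L+2) → Fin L) (j : Fin L) (t t' : ℕ) : ℕ :=
  (Finset.univ.filter fun s : Fin (L+2) => t ≤ s.val ∧ s.val < t' ∧ f s = j).card

lemma cnt_add_icnt (f : Fin (L+2) → Fin L) (j : Fin L) {t t' : ℕ} (h : t ≤ t') :
    cnt f j t' = cnt f j t + icnt f j t t' := by
  unfold cnt icnt
  rw [← Finset.card_union_of_disjoint]
  · congr 1
    ext s
    simp only [Finset.mem_filter, Finset.mem_union, Finset.mem_univ, true_and]
    constructor
    · rintro ⟨hs, hj⟩
      rcases Nat.lt_or_ge s.val t with h' | h'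
      · exact Or.inl ⟨h', hj⟩
      · exact Or.inr ⟨h', hs, hj⟩
    · rintro (⟨hs, hj⟩ | ⟨hs1, hs2, hj⟩)
      · exact ⟨by omega, hj⟩
      · exact ⟨hs2, hj⟩
  · rw [Finset.disjoint_left]
    intro s h1 h2
    simp only [Finset.mem_filter] at h1 h2
    omega

lemma sum_icnt (f : Fin (L+2) → Fin L) {t t' : ℕ} (h : t ≤ t') (h' : t' ≤ L+2) :
    ∑ j, icnt f j t t' = t' - t := by
  have hfib := Finset.card_eq_sum_card_fiberwise
    (f := f) (s := Finset.univ.filter fun s : Fin (L+2) => t ≤ s.val ∧ s.val < t')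
    (t := Finset.univ) (fun x _ => Finset.mem_univ _)
  have hicnt : ∀ j, ((Finset.univ.filter fun s : Fin (L+2) => t ≤ s.val ∧ s.val < t').filter
      fun s => f s = j) = Finset.univ.filter fun s : Fin (L+2) => t ≤ s.val ∧ s.val < t' ∧ f s = j := by
    intro j
    rw [Finset.filter_filter]
    apply Finset.filter_congr
    intro s _
    tauto
  have hcard : (Finset.univ.filter fun s : Fin (L+2) => t ≤ s.val ∧ s.val < t').card = t' - t := by
    rw [show t' - t = (Finset.Ico t t').card by rw [Nat.card_Ico]]
    apply Finset.card_bij' (fun s _ => s.val) (fun m hm => ⟨m, by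
      simp only [Finset.mem_Ico] at hm; omega⟩)
    · intro a _; rfl
    · intro m _; rfl
    · intro a ha
      simp only [Finset.mem_filter] at ha
      simp only [Finset.mem_Ico]
      omega
    · intro m hm
      simp only [Finset.mem_Ico] at hm
      simp only [Finset.mem_filter, Finset.mem_univ, true_and]
      omega
  unfold icnt
  rw [← hcard, hfib]
  apply Finset.sum_congr rfl
  intro j _
  rw [hicnt]

lemma icnt_le_Nf (f : Fin (L+2) → Fin L) (j : Fin L) (t t' : ℕ) :
    icnt f j t t' ≤ Nf f j := by
  apply Finset.card_le_card
  intro s hs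
  simp only [Finset.mem_filter] at *
  tauto

lemma mem_icnt {f : Fin (L+2) → Fin L} {j : Fin L} {t t' : ℕ} {s : Fin (L+2)}
    (h1 : t ≤ s.val) (h2 : s.val < t') (h3 : f s = j) : 0 < icnt f j t t' := by
  apply Finset.card_pos.2
  exact ⟨s, by simp [icnt, h1, h2, h3]⟩

lemma pathOf_injective {f : Fin (L+2) → Fin L} (hf : Qf f) :
    Function.Injective (pathOf f) := by
  obtain ⟨hodd, hcons⟩ := hf
  obtain ⟨r, hr3, hr1⟩ := exists_repeat hodd
  suffices H : ∀ t t' : Fin (L+2+1), t.val ≤ t'.val → pathOf f t = pathOf f t' → t = t' by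
    intro t t' h
    rcases le_total t.val t'.val with hle | hle
    · exact H t t' hle h
    · exact (H t' t hle h.symm).symm
  intro t t' hle heq
  by_contra hne
  have hlt : t.val < t'.val := lt_of_le_of_ne hle (fun h => hne (Fin.ext h))
  have ht' : t'.val ≤ L + 2 := by omega
  have hpar : ∀ j, icnt f j t.val t'.val % 2 = 0 := by
    intro j
    have h1 := cnt_add_icnt f j (le_of_lt hlt)
    have h2 := decide_eq_decide.mp (congrFun heq j)
    rw [Nat.odd_iff, Nat.odd_iff] at h2
    omega
  have hothers : ∀ j, j ≠ r → icnt f j t.val t'.val = 0 := by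
    intro j hj
    have hle1 := icnt_le_Nf f j t.val t'.val
    rw [hr1 j hj] at hle1
    have := hpar j
    omega
  have hsum := sum_icnt f (le_of_lt hlt) ht'
  have hic : icnt f r t.val t'.val = t'.val - t.val := by
    rw [← hsum]
    exact (Finset.sum_eq_single_of_mem r (Finset.mem_univ r)
      (fun j _ hj => hothers j hj)).symm
  have hler := icnt_le_Nf f r t.val t'.val
  rw [hr3] at hler
  have hpr := hpar r
  have hts : t.val + 2 = t'.val := by omega
  have hstep : ∀ s : Fin (L+2), t.val ≤ s.val → s.val < t'.val → f s = r := by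
    intro s h1 h2
    by_contra hfs
    have h0 := hothers (f s) hfs
    have := mem_icnt h1 h2 (rfl : f s = f s)
    omega
  have hb2 : t.val + 1 < L + 2 := by omega
  have e1 : f ⟨t.val, by omega⟩ = r :=
    hstep ⟨t.val, by omega⟩ (by simp) (by simp; omega)
  have e2 : f ⟨t.val + 1, hb2⟩ = r :=
    hstep ⟨t.val + 1, hb2⟩ (by simp) (by simp; omega)
  exact hcons t.val hb2 (e1.trans e2.symm)

lemma pathOf_step (f : Fin (L+2) → Fin L) (i : Fin (L+2)) (j : Fin L) :
    pathOf f i.castSucc j ≠ pathOf f i.succ j ↔ j = f i := by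
  have hc : (i.castSucc : Fin (L+2+1)).val = i.val := rfl
  have hs : (i.succ : Fin (L+2+1)).val = i.val + 1 := rfl
  simp only [pathOf, hc, hs, ne_eq, decide_eq_decide]
  rw [cnt_succ f j i.isLt]
  have hi : (⟨i.val, i.isLt⟩ : Fin (L+2)) = i := rfl
  rw [hi]
  rw [Nat.odd_iff, Nat.odd_iff]
  constructor
  · intro hx
    by_contra hji
    rw [if_neg (fun h => hji h.symm)] at hx
    omega
  · intro hx
    rw [if_pos hx.symm]
    omega

lemma pathOf_adj (f : Fin (L+2) → Fin L) (i : Fin (L+2)) :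
    HypercubeAdj (pathOf f i.castSucc) (pathOf f i.succ) := by
  refine ⟨f i, ?_, ?_⟩
  · exact (pathOf_step f i (f i)).2 rfl
  · intro j hj
    exact (pathOf_step f i j).1 hj

/-- flip word of a path -/
def flipOf (p : Fin (L+2+1) → Fin L → Bool)
    (hadj : ∀ i : Fin (L+2), HypercubeAdj (p i.castSucc) (p i.succ)) : Fin (L+2) → Fin L :=
  fun i => Fintype.choose _ (hadj i)

lemma path_eq_pathOf (p : Fin (L+2+1) → Fin L → Bool)
    (h0 : p 0 = fun _ => false)
    (hadj : ∀ i : Fin (L+2), HypercubeAdj (p i.castSucc) (p i.succ)) :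
    p = pathOf (flipOf p hadj) := by
  set f := flipOf p hadj with hfdef
  refine funext (Fin.induction ?_ ?_)
  · rw [h0]
    funext j
    simp [pathOf, cnt_zero]
  · intro i ih
    have hspec : p i.castSucc (f i) ≠ p i.succ (f i) :=
      Fintype.choose_spec (fun j => p i.castSucc j ≠ p i.succ j) (hadj i)
    have huniq : ∀ k, p i.castSucc k ≠ p i.succ k → k = f i :=
      fun k hk => (hadj i).unique hk hspec
    funext j
    by_cases hj : j = f i
    · have hne : p i.castSucc j ≠ p i.succ j := by rw [hj]; exact hspec
      have hne2 : pathOf f i.castSucc j ≠ pathOf f i.succ j := (pathOf_step f i j).2 hj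
      have h1 : p i.succ j = !(p i.castSucc j) := Bool.eq_not_iff.mpr (Ne.symm hne)
      have h2 : pathOf f i.succ j = !(pathOf f i.castSucc j) :=
        Bool.eq_not_iff.mpr (Ne.symm hne2)
      rw [h1, ih, ← h2]
    · have h1 : p i.succ j = p i.castSucc j := by
        by_contra hcon
        exact hj (huniq j (fun hcc => hcon hcc.symm))
      have h2 : pathOf f i.succ j = pathOf f i.castSucc j := by
        by_contra hcon
        exact hj ((pathOf_step f i j).1 (fun hcc => hcon hcc.symm))
      rw [h1, ih, ← h2]

lemma flipOf_pathOf (f : Fin (L+2) → Fin L) :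
    flipOf (pathOf f) (pathOf_adj f) = f := by
  funext i
  have h := Fintype.choose_spec (fun j => pathOf f i.castSucc j ≠ pathOf f i.succ j)
    (pathOf_adj f i)
  exact (pathOf_step f i _).1 h

/-- Qf holds for the flip word of a good path -/
lemma Qf_flipOf (p : Fin (L+2+1) → Fin L → Bool)
    (hinj : Function.Injective p)
    (h0 : p 0 = fun _ => false)
    (hlast : p (Fin.last (L+2)) = fun _ => true)
    (hadj : ∀ i : Fin (L+2), HypercubeAdj (p i.castSucc) (p i.succ)) :
    Qf (flipOf p hadj) := by
  set f := flipOf p hadj with hfdef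
  have hp := path_eq_pathOf p h0 hadj
  constructor
  · intro j
    have := congrFun hlast j
    rw [hp] at this
    simp only [pathOf, Fin.val_last, cnt_top] at this
    exact of_decide_eq_true this
  · intro s h hcontra
    have hs3 : s + 2 < L + 2 + 1 := by omega
    have heq2 : p ⟨s, by omega⟩ = p ⟨s + 2, hs3⟩ := by
      rw [congrFun hp ⟨s, by omega⟩, congrFun hp ⟨s + 2, hs3⟩]
      funext j
      show decide (Odd (cnt f j s)) = decide (Odd (cnt f j ((s+1)+1)))
      rw [cnt_succ f j h, cnt_succ f j (show s < L+2 by omega)]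
      apply decide_eq_decide.mpr
      rw [Nat.odd_iff, Nat.odd_iff]
      have hcv : (f ⟨s+1, h⟩ = j) ↔ (f ⟨s, by omega⟩ = j) := by rw [hcontra]
      by_cases hfj : f ⟨s, (by omega : s < L + 2)⟩ = j
      · rw [if_pos hfj, if_pos (hcv.mpr hfj)]
        omega
      · rw [if_neg hfj, if_neg (fun hc => hfj (hcv.mp hc))]
        omega
    have := hinj heq2
    rw [Fin.mk.injEq] at this
    omega

/-- the type of good paths -/
abbrev PathT (L : ℕ) := {p : Fin (L+2+1) → Fin L → Bool //
  IsSAPath (L+2) p ∧ p 0 = (fun _ => false) ∧ p (Fin.last (L+2)) = (fun _ => true)}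

abbrev FlipT (L : ℕ) := {f : Fin (L+2) → Fin L // Qf f}

lemma pathOf_mem {f : Fin (L+2) → Fin L} (hf : Qf f) :
    IsSAPath (L+2) (pathOf f) ∧ pathOf f 0 = (fun _ => false) ∧
      pathOf f (Fin.last (L+2)) = (fun _ => true) := by
  refine ⟨⟨pathOf_injective hf, pathOf_adj f⟩, ?_, ?_⟩
  · funext j; simp [pathOf, cnt_zero]
  · funext j
    simp only [pathOf, Fin.val_last, cnt_top]
    simpa using hf.1 j

def pathFlipEquiv (L : ℕ) : PathT L ≃ FlipT L where
  toFun p := ⟨flipOf p.1 p.2.1.2, Qf_flipOf p.1 p.2.1.1 p.2.2.1 p.2.2.2 p.2.1.2⟩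
  invFun f := ⟨pathOf f.1, pathOf_mem f.2⟩
  left_inv p := by
    apply Subtype.ext
    exact (path_eq_pathOf p.1 p.2.2.1 p.2.1.2).symm
  right_inv f := by
    apply Subtype.ext
    exact flipOf_pathOf f.1

/-- the triple type -/
abbrev TripT (L : ℕ) := {t : Fin L × Fin L × Fin L // t.1 < t.2.1 ∧ t.2.1 < t.2.2}

/-- insertion: build a flip word from a permutation and a triple -/
def ins (σ : Equiv.Perm (Fin L)) (a b c : Fin L) : Fin (L+2) → Fin L := fun s =>
  if h : s.val = b.val + 1 ∨ s.val = c.val + 2 then σ a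
  else σ ⟨s.val - (if b.val + 1 < s.val then 1 else 0) - (if c.val + 2 < s.val then 1 else 0),
    by
      have := s.isLt; have := b.isLt; have := c.isLt
      split_ifs <;> omega⟩

/-- the increasing enumeration of the complement of the two inserted positions -/
def iota (b c k : Fin L) : Fin (L+2) :=
  ⟨k.val + (if b.val + 1 ≤ k.val then 1 else 0) + (if c.val + 1 ≤ k.val then 1 else 0), by
    have := k.isLt; split_ifs <;> omega⟩

lemma iota_not_special {b c : Fin L} (hbc : b < c) (k : Fin L) :
    ¬((iota b c k).val = b.val + 1 ∨ (iota b c k).val = c.val + 2) := by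
  have hbc' : b.val < c.val := hbc
  have := k.isLt
  simp only [iota, Fin.val_mk]
  split_ifs <;> omega

lemma ins_iota (σ : Equiv.Perm (Fin L)) (a b c : Fin L) (hbc : b < c) (k : Fin L) :
    ins σ a b c (iota b c k) = σ k := by
  have h1 := iota_not_special hbc k
  unfold ins
  rw [dif_neg h1]
  apply congrArg σ
  apply Fin.ext
  have := k.isLt
  have hbc' : b.val < c.val := hbc
  simp only [iota, Fin.val_mk]
  split_ifs <;> omega

lemma ins_pos (σ : Equiv.Perm (Fin L)) (a b c : Fin L) (s : Fin (L+2))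
    (h : s.val = b.val + 1 ∨ s.val = c.val + 2) : ins σ a b c s = σ a := by
  simp only [ins]
  exact dif_pos h

lemma ins_neg (σ : Equiv.Perm (Fin L)) (a b c : Fin L) (s : Fin (L+2))
    (h : ¬(s.val = b.val + 1 ∨ s.val = c.val + 2)) :
    ins σ a b c s = σ ⟨s.val - (if b.val + 1 < s.val then 1 else 0)
      - (if c.val + 2 < s.val then 1 else 0), by
        have := s.isLt; have := b.isLt; have := c.isLt; split_ifs <;> omega⟩ := by
  simp only [ins]
  exact dif_neg h

lemma fiber_ins_repeat (σ : Equiv.Perm (Fin L)) (a b c : Fin L) (hab : a < b) (hbc : b < c) :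
    (Finset.univ.filter fun s => ins σ a b c s = σ a) =
      {(⟨a.val, by omega⟩ : Fin (L+2)), ⟨b.val + 1, by have := b.isLt; omega⟩,
        ⟨c.val + 2, by have := c.isLt; omega⟩} := by
  have hab' : a.val < b.val := hab
  have hbc' : b.val < c.val := hbc
  have hcL := c.isLt
  ext s
  have hsL := s.isLt
  simp only [Finset.mem_filter, Finset.mem_univ, true_and]
  simp only [Finset.mem_filter, Finset.mem_univ, true_and, Finset.mem_insert,
    Finset.mem_singleton, ins]
  split_ifs with hs
  · constructor
    · intro _
      rcases hs with h | h
      · right; left; exact Fin.ext h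
      · right; right; exact Fin.ext h
    · intro _; rfl
  all_goals
    rw [Equiv.apply_eq_iff_eq]
    simp only [Fin.ext_iff, Fin.val_mk]
    omega

lemma Nf_ins_repeat (σ : Equiv.Perm (Fin L)) (a b c : Fin L) (hab : a < b) (hbc : b < c) :
    Nf (ins σ a b c) (σ a) = 3 := by
  have hab' : a.val < b.val := hab
  have hbc' : b.val < c.val := hbc
  unfold Nf
  rw [fiber_ins_repeat σ a b c hab hbc]
  rw [Finset.card_insert_of_notMem, Finset.card_insert_of_notMem, Finset.card_singleton]
  · simp only [Finset.mem_singleton, Fin.ext_iff, Fin.val_mk]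
    omega
  · simp only [Finset.mem_insert, Finset.mem_singleton, Fin.ext_iff, Fin.val_mk]
    omega

lemma Nf_ins_other (σ : Equiv.Perm (Fin L)) (a b c : Fin L) (hab : a < b) (hbc : b < c)
    (j : Fin L) (hj : j ≠ σ a) : Nf (ins σ a b c) j = 1 := by
  have h1 : ∀ j' : Fin L, j' ≠ σ a → 1 ≤ Nf (ins σ a b c) j' := by
    intro j' hj'
    apply Finset.card_pos.2
    refine ⟨iota b c (σ.symm j'), ?_⟩
    simp only [Finset.mem_filter, Finset.mem_univ, true_and]
    rw [ins_iota σ a b c hbc]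
    exact σ.apply_symm_apply j'
  have hsum := sum_Nf (ins σ a b c)
  have hrep := Nf_ins_repeat σ a b c hab hbc
  have hA := Finset.sum_erase_add Finset.univ (Nf (ins σ a b c)) (Finset.mem_univ (σ a))
  have hce : (Finset.univ.erase (σ a)).card = L - 1 := by
    rw [Finset.card_erase_of_mem (Finset.mem_univ _), Finset.card_fin]
  have hL1 : 1 ≤ L := by
    by_contra hc
    interval_cases L
    exact absurd a.isLt (by omega)
  refine all_one (fun x hx => h1 x (Finset.ne_of_mem_erase hx)) ?_ j
    (Finset.mem_erase.2 ⟨hj, Finset.mem_univ j⟩)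
  omega

lemma Qf_ins (σ : Equiv.Perm (Fin L)) (a b c : Fin L) (hab : a < b) (hbc : b < c) :
    Qf (ins σ a b c) := by
  constructor
  · intro j
    by_cases hj : j = σ a
    · rw [hj, Nf_ins_repeat σ a b c hab hbc]; exact ⟨1, rfl⟩
    · rw [Nf_ins_other σ a b c hab hbc j hj]; exact ⟨0, rfl⟩
  · intro s hs heq
    have hab' : a.val < b.val := hab
    have hbc' : b.val < c.val := hbc
    have hbL := b.isLt
    have hcL := c.isLt
    by_cases h0 : s = b.val + 1 ∨ s = c.val + 2 <;>
      by_cases h1 : s + 1 = b.val + 1 ∨ s + 1 = c.val + 2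
    · omega
    · have e0 := ins_pos σ a b c ⟨s, by omega⟩ h0
      have e1 := ins_neg σ a b c ⟨s+1, hs⟩ h1
      have h9 := congrArg Fin.val (σ.injective ((e0.symm.trans heq).trans e1))
      simp only [Fin.val_mk] at h9
      split_ifs at h9 <;> omega
    · have e0 := ins_neg σ a b c ⟨s, by omega⟩ h0
      have e1 := ins_pos σ a b c ⟨s+1, hs⟩ h1
      have h9 := congrArg Fin.val (σ.injective ((e0.symm.trans heq).trans e1))
      simp only [Fin.val_mk] at h9
      split_ifs at h9 <;> omega
    · have e0 := ins_neg σ a b c ⟨s, by omega⟩ h0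
      have e1 := ins_neg σ a b c ⟨s+1, hs⟩ h1
      have h9 := congrArg Fin.val (σ.injective ((e0.symm.trans heq).trans e1))
      simp only [Fin.val_mk] at h9
      split_ifs at h9 <;> omega

def insT (L : ℕ) : Equiv.Perm (Fin L) × TripT L → FlipT L :=
  fun x => ⟨ins x.1 x.2.1.1 x.2.1.2.1 x.2.1.2.2, Qf_ins _ _ _ _ x.2.2.1 x.2.2.2⟩

lemma ins_inj_aux (L : ℕ) (σ σ' : Equiv.Perm (Fin L)) (a b c a' b' c' : Fin L)
    (hab : a < b) (hbc : b < c) (hab' : a' < b') (hbc' : b' < c')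
    (heq : ins σ a b c = ins σ' a' b' c') :
    σ = σ' ∧ a = a' ∧ b = b' ∧ c = c' := by
  -- the repeated value is the same
  have hrep : σ a = σ' a' := by
    by_contra hne
    have h1 := Nf_ins_repeat σ a b c hab hbc
    have h2 := Nf_ins_other σ' a' b' c' hab' hbc' (σ a) hne
    rw [heq] at h1
    rw [h1] at h2
    exact absurd h2 (by norm_num)
  -- the fibers coincide
  have hfib := fiber_ins_repeat σ a b c hab hbc
  have hfib' := fiber_ins_repeat σ' a' b' c' hab' hbc'
  rw [heq, hrep, hfib'] at hfib
  have haa : a = a' ∧ b = b' ∧ c = c' := by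
    have hm1 := Finset.ext_iff.mp hfib ⟨a.val, by omega⟩
    have hm2 := Finset.ext_iff.mp hfib ⟨b.val + 1, by have := b.isLt; omega⟩
    have hm3 := Finset.ext_iff.mp hfib ⟨c.val + 2, by have := c.isLt; omega⟩
    simp only [Finset.mem_insert, Finset.mem_singleton, Fin.ext_iff, Fin.val_mk,
      true_or, or_true, true_iff, iff_true] at hm1 hm2 hm3
    have e1 := hm1
    have e2 := hm2
    have e3 := hm3
    have g1 : a.val < b.val := hab
    have g2 : b.val < c.val := hbc
    have g3 : a'.val < b'.val := hab'
    have g4 : b'.val < c'.val := hbc'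
    refine ⟨Fin.ext ?_, Fin.ext ?_, Fin.ext ?_⟩ <;> omega
  obtain ⟨ha, hb, hc⟩ := haa
  subst ha; subst hb; subst hc
  refine ⟨?_, rfl, rfl, rfl⟩
  apply Equiv.ext
  intro k
  have h1 := ins_iota σ a b c hbc k
  have h2 := ins_iota σ' a b c hbc k
  rw [heq] at h1
  exact h1.symm.trans h2

lemma insT_injective (L : ℕ) : Function.Injective (insT L) := by
  rintro ⟨σ, ⟨⟨a, b, c⟩, hab, hbc⟩⟩ ⟨σ', ⟨⟨a', b', c'⟩, hab', hbc'⟩⟩ h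
  have heq : ins σ a b c = ins σ' a' b' c' := congrArg Subtype.val h
  obtain ⟨h1, h2, h3, h4⟩ := ins_inj_aux L σ σ' a b c a' b' c' hab hbc hab' hbc' heq
  subst h1; subst h2; subst h3; subst h4
  rfl

lemma insT_surjective (L : ℕ) : Function.Surjective (insT L) := by
  rintro ⟨f, hodd, hcons⟩
  obtain ⟨r, hr3, hr1⟩ := exists_repeat hodd
  have hF : (Finset.univ.filter fun s => f s = r).card = 3 := hr3
  set F := Finset.univ.filter fun s => f s = r with hFdef
  let e := F.orderEmbOfFin hF
  have he_mem : ∀ i : Fin 3, f (e i) = r := by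
    intro i
    have := F.orderEmbOfFin_mem hF i
    simp only [hFdef, Finset.mem_filter] at this
    exact this.2
  have he01 : (e 0).val < (e 1).val := e.strictMono (by decide)
  have he12 : (e 1).val < (e 2).val := e.strictMono (by decide)
  have hspace1 : (e 0).val + 1 < (e 1).val := by
    by_contra hsp
    have hv : (e 1).val = (e 0).val + 1 := by omega
    refine hcons (e 0).val (by rw [← hv]; exact (e 1).isLt) ?_
    have h1 : (⟨(e 0).val, by omega⟩ : Fin (L+2)) = e 0 := rfl
    have h2 : (⟨(e 0).val + 1, by rw [← hv]; exact (e 1).isLt⟩ : Fin (L+2)) = e 1 :=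
      Fin.ext (by simp [hv])
    rw [h1, h2, he_mem 0, he_mem 1]
  have hspace2 : (e 1).val + 1 < (e 2).val := by
    by_contra hsp
    have hv : (e 2).val = (e 1).val + 1 := by omega
    refine hcons (e 1).val (by rw [← hv]; exact (e 2).isLt) ?_
    have h1 : (⟨(e 1).val, by omega⟩ : Fin (L+2)) = e 1 := rfl
    have h2 : (⟨(e 1).val + 1, by rw [← hv]; exact (e 2).isLt⟩ : Fin (L+2)) = e 2 :=
      Fin.ext (by simp [hv])
    rw [h1, h2, he_mem 1, he_mem 2]
  have he2L : (e 2).val < L + 2 := (e 2).isLt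
  -- the triple
  have hbL : (e 1).val - 1 < L := by omega
  have haL : (e 0).val < L := by omega
  have hcL : (e 2).val - 2 < L := by omega
  set a : Fin L := ⟨(e 0).val, haL⟩ with hadef
  set b : Fin L := ⟨(e 1).val - 1, hbL⟩ with hbdef
  set c : Fin L := ⟨(e 2).val - 2, hcL⟩ with hcdef
  -- members of F are exactly e 0, e 1, e 2
  have hmemF : ∀ s : Fin (L+2), f s = r → s = e 0 ∨ s = e 1 ∨ s = e 2 := by
    intro s hsr
    have hsF : s ∈ F := by simp [hFdef, hsr]
    have : s ∈ Set.range (F.orderEmbOfFin hF) := by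
      rw [F.range_orderEmbOfFin hF]; exact hsF
    obtain ⟨i, hi⟩ := this
    have : i = 0 ∨ i = 1 ∨ i = 2 := by omega
    rcases this with h | h | h <;> subst h
    · exact Or.inl hi.symm
    · exact Or.inr (Or.inl hi.symm)
    · exact Or.inr (Or.inr hi.symm)
  -- the permutation
  set σ0 : Fin L → Fin L := fun k => f (iota b c k) with hσ0def
  have hiota_props : ∀ k : Fin L, (iota b c k).val ≠ (e 1).val ∧ (iota b c k).val ≠ (e 2).val := by
    intro k
    have hk := k.isLt
    simp only [iota, Fin.val_mk, hbdef, hcdef]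
    split_ifs <;> omega
  have hiota_inj : ∀ k k' : Fin L, iota b c k = iota b c k' → k = k' := by
    intro k k' hkk
    have := congrArg Fin.val hkk
    have hk := k.isLt
    have hk' := k'.isLt
    simp only [iota, Fin.val_mk, hbdef, hcdef] at this
    apply Fin.ext
    split_ifs at this <;> omega
  have hσ0_inj : Function.Injective σ0 := by
    intro k k' hkk
    simp only [hσ0def] at hkk
    by_cases hval : f (iota b c k) = r
    · have hval' : f (iota b c k') = r := by rw [← hkk]; exact hval
      have m1 := hmemF _ hval
      have m2 := hmemF _ hval'
      have p1 := hiota_props k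
      have p2 := hiota_props k'
      have q1 : iota b c k = e 0 := by
        rcases m1 with h | h | h
        · exact h
        · exact absurd (congrArg Fin.val h) p1.1
        · exact absurd (congrArg Fin.val h) p1.2
      have q2 : iota b c k' = e 0 := by
        rcases m2 with h | h | h
        · exact h
        · exact absurd (congrArg Fin.val h) p2.1
        · exact absurd (congrArg Fin.val h) p2.2
      exact hiota_inj k k' (q1.trans q2.symm)
    · have hN := hr1 (f (iota b c k)) hval
      have hsub : {iota b c k, iota b c k'} ⊆
          Finset.univ.filter fun s => f s = f (iota b c k) := by
        intro x hx
        simp only [Finset.mem_insert, Finset.mem_singleton] at hx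
        rcases hx with rfl | rfl
        · simp
        · simp [← hkk]
      by_contra hne
      have hcard2 : ({iota b c k, iota b c k'} : Finset (Fin (L+2))).card = 2 := by
        rw [Finset.card_insert_of_notMem, Finset.card_singleton]
        simp only [Finset.mem_singleton]
        intro hcc
        exact hne (hiota_inj k k' hcc)
      have := Finset.card_le_card hsub
      rw [hcard2] at this
      unfold Nf at hN
      omega
  have hσ0_bij : Function.Bijective σ0 := Finite.injective_iff_bijective.mp hσ0_inj
  set σ : Equiv.Perm (Fin L) := Equiv.ofBijective σ0 hσ0_bij with hσdef
  have hab : a < b := by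
    show a.val < b.val
    simp only [hadef, hbdef, Fin.val_mk]
    omega
  have hbc : b < c := by
    show b.val < c.val
    simp only [hbdef, hcdef, Fin.val_mk]
    omega
  refine ⟨(σ, ⟨(a, b, c), hab, hbc⟩), ?_⟩
  apply Subtype.ext
  show ins σ a b c = f
  -- σ a = r
  have hiota_a : iota b c a = e 0 := by
    apply Fin.ext
    simp only [iota, Fin.val_mk, hadef, hbdef, hcdef]
    split_ifs <;> omega
  have hσa : σ a = r := by
    show σ0 a = r
    simp only [hσ0def]
    rw [hiota_a]
    exact he_mem 0
  funext s
  by_cases hs : s.val = b.val + 1 ∨ s.val = c.val + 2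
  · rw [ins_pos σ a b c s hs, hσa]
    have hbv : b.val = (e 1).val - 1 := rfl
    have hcv : c.val = (e 2).val - 2 := rfl
    have : s = e 1 ∨ s = e 2 := by
      rcases hs with h | h
      · left; apply Fin.ext; omega
      · right; apply Fin.ext; omega
    rcases this with rfl | rfl
    · exact (he_mem 1).symm
    · exact (he_mem 2).symm
  · rw [ins_neg σ a b c s hs]
    show σ0 _ = f s
    simp only [hσ0def]
    congr 1
    apply Fin.ext
    have hbv : b.val = (e 1).val - 1 := rfl
    have hcv : c.val = (e 2).val - 2 := rfl
    have hsL := s.isLt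
    simp only [iota, Fin.val_mk]
    split_ifs <;> omega

lemma insT_bijective (L : ℕ) : Function.Bijective (insT L) :=
  ⟨insT_injective L, insT_surjective L⟩

def tripleFun {L : ℕ} (a b c : Fin L) : Fin 3 → Fin L :=
  fun i => if i.val = 0 then a else if i.val = 1 then b else c

lemma card_tripT (L : ℕ) : Nat.card (TripT L) = L.choose 3 := by
  have e : TripT L ≃ {s : Finset (Fin L) // s.card = 3} := by
    refine
      { toFun := fun t => ⟨{t.1.1, t.1.2.1, t.1.2.2}, ?_⟩
        invFun := fun s => ⟨(s.1.orderEmbOfFin s.2 0, s.1.orderEmbOfFin s.2 1,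
            s.1.orderEmbOfFin s.2 2),
          (s.1.orderEmbOfFin s.2).strictMono (by decide),
          (s.1.orderEmbOfFin s.2).strictMono (by decide)⟩
        left_inv := ?_
        right_inv := ?_ }
    · obtain ⟨⟨a, b, c⟩, h1, h2⟩ := t
      rw [Finset.card_insert_of_notMem, Finset.card_insert_of_notMem, Finset.card_singleton]
      · simp only [Finset.mem_singleton]
        exact ne_of_lt h2
      · simp only [Finset.mem_insert, Finset.mem_singleton]
        push_neg
        exact ⟨ne_of_lt h1, ne_of_lt (h1.trans h2)⟩
    · rintro ⟨⟨a, b, c⟩, h1, h2⟩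
      apply Subtype.ext
      have e0 : tripleFun a b c 0 = a := rfl
      have e1 : tripleFun a b c 1 = b := rfl
      have e2 : tripleFun a b c 2 = c := rfl
      have hmono : StrictMono (tripleFun a b c) := by
        intro i j hij
        fin_cases i <;> fin_cases j <;>
          first
            | exact h1
            | exact h2
            | exact h1.trans h2
            | exact absurd hij (by decide)
      have hfs : ∀ x, tripleFun a b c x ∈ ({a, b, c} : Finset (Fin L)) := by
        intro x
        fin_cases x <;> simp [e0, e1, e2]
      have hcard : ({a, b, c} : Finset (Fin L)).card = 3 := by
        rw [Finset.card_insert_of_notMem, Finset.card_insert_of_notMem,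
          Finset.card_singleton]
        · simp only [Finset.mem_singleton]
          exact ne_of_lt h2
        · simp only [Finset.mem_insert, Finset.mem_singleton]
          push_neg
          exact ⟨ne_of_lt h1, ne_of_lt (h1.trans h2)⟩
      have huniq := Finset.orderEmbOfFin_unique hcard hfs hmono
      simp only []
      refine Prod.ext ?_ (Prod.ext ?_ ?_)
      · exact ((congrFun huniq 0).symm.trans e0 : _)
      · exact ((congrFun huniq 1).symm.trans e1 : _)
      · exact ((congrFun huniq 2).symm.trans e2 : _)
    · rintro ⟨s, hs⟩
      apply Subtype.ext
      show ({s.orderEmbOfFin hs 0, s.orderEmbOfFin hs 1, s.orderEmbOfFin hs 2} : Finset (Fin L)) = s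
      apply Finset.eq_of_subset_of_card_le
      · intro x hx
        simp only [Finset.mem_insert, Finset.mem_singleton] at hx
        rcases hx with rfl | rfl | rfl <;> exact s.orderEmbOfFin_mem hs _
      · rw [hs]
        have h01 : s.orderEmbOfFin hs 0 ≠ s.orderEmbOfFin hs 1 :=
          ne_of_lt ((s.orderEmbOfFin hs).strictMono (by decide))
        have h02 : s.orderEmbOfFin hs 0 ≠ s.orderEmbOfFin hs 2 :=
          ne_of_lt ((s.orderEmbOfFin hs).strictMono (by decide))
        have h12 : s.orderEmbOfFin hs 1 ≠ s.orderEmbOfFin hs 2 :=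
          ne_of_lt ((s.orderEmbOfFin hs).strictMono (by decide))
        rw [Finset.card_insert_of_notMem, Finset.card_insert_of_notMem,
          Finset.card_singleton]
        · simp only [Finset.mem_singleton]
          exact h12
        · simp only [Finset.mem_insert, Finset.mem_singleton]
          push_neg
          exact ⟨h01, h02⟩
  rw [Nat.card_congr e, Nat.card_eq_fintype_card, Fintype.card_finset_len, Fintype.card_fin]

end Stmt3Aux

open Stmt3Aux in
/-- The number of self-avoiding paths of length `L+2` (one backstep) from
`(0,…,0)` to `(1,…,1)` on the `L`-hypercube equals `L! · L(L-1)(L-2)/6`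
(stated multiplied by 6 to avoid division). -/
theorem stmt3 (L : ℕ) (hL : 1 ≤ L) :
    6 * Nat.card {p : Fin (L+2+1) → Fin L → Bool //
      IsSAPath (L+2) p ∧ p 0 = (fun _ => false) ∧ p (Fin.last (L+2)) = (fun _ => true)}
      = L.factorial * (L * (L-1) * (L-2)) := by
  have h1 : Nat.card (PathT L) = Nat.card (FlipT L) := Nat.card_congr (pathFlipEquiv L)
  have h2 : Nat.card (FlipT L) = Nat.card (Equiv.Perm (Fin L) × TripT L) :=
    (Nat.card_eq_of_bijective _ (insT_bijective L)).symm
  have h3 : Nat.card (Equiv.Perm (Fin L) × TripT L) = L.factorial * L.choose 3 := by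
    rw [Nat.card_prod, card_tripT]
    congr 1
    rw [Nat.card_eq_fintype_card, Fintype.card_perm, Fintype.card_fin]
  have key : (6 : ℕ) * L.choose 3 = L * (L-1) * (L-2) := by
    have hd : L.descFactorial 3 = L * (L-1) * (L-2) := by
      simp [Nat.descFactorial_succ, Nat.descFactorial]
      ring
    have := Nat.factorial_dvd_descFactorial L 3
    rw [Nat.choose_eq_descFactorial_div_factorial, ← hd]
    have h6 : (3 : ℕ).factorial = 6 := rfl
    rw [h6] at this
    exact Nat.mul_div_cancel' this
  calc 6 * Nat.card (PathT L) = 6 * (L.factorial * L.choose 3) := by rw [h1, h2, h3]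
    _ = L.factorial * (6 * L.choose 3) := by ring
    _ = _ := by rw [key]
end

section
/- Let Theta be the number of open (strictly fitness-increasing) self-avoiding paths from the all-zeros vertex (with fitness x) to the all-ones vertex (with fitness 1) on the L-hypercube, where interior vertices have i.i.d. uniform [0,1] fitnesses. Then E[Theta] <= L * sinh(1-x)^L * cosh(1-x)/sinh(1-x). -/
/-- `A L p`: number of self-avoiding paths of length `L+2p` from all-zeros to
all-ones on the `L`-hypercube. -/
noncomputable def A (L p : ℕ) : ℕ :=
  Nat.card {f : Fin (L + 2*p + 1) → Fin L → Bool //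
    IsSAPath (L + 2*p) f ∧ f 0 = (fun _ => false) ∧
      f (Fin.last (L + 2*p)) = (fun _ => true)}

/-- sign of a Bool: true ↦ 1, false ↦ -1 -/
def sg (b : Bool) : ℝ := if b then 1 else -1

/-- number of occurrences of `i` in the sequence `s` -/
def cnt {n L : ℕ} (s : Fin n → Fin L) (i : Fin L) : ℕ :=
  (Finset.univ.filter (fun j => s j = i)).card

/-- number of sequences with all counts odd -/
noncomputable def Wt (L n : ℕ) : ℕ :=
  Nat.card {s : Fin n → Fin L // ∀ i, Odd (cnt s i)}

lemma key1 (L n : ℕ) :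
    ∑ ε : Fin L → Bool, (∏ i, sg (ε i)) * (∑ i, sg (ε i)) ^ n
      = 2 ^ L * (Wt L n : ℝ) := by
  classical
  have h1 : ∀ ε : Fin L → Bool,
      (∑ i, sg (ε i)) ^ n = ∑ s : Fin n → Fin L, ∏ j, sg (ε (s j)) := by
    intro ε
    rw [Finset.sum_pow', Fintype.piFinset_univ]
  calc ∑ ε : Fin L → Bool, (∏ i, sg (ε i)) * (∑ i, sg (ε i)) ^ n
      = ∑ ε : Fin L → Bool, ∑ s : Fin n → Fin L,
          (∏ i, sg (ε i)) * ∏ j, sg (ε (s j)) := by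
        refine Finset.sum_congr rfl fun ε _ => ?_
        rw [h1, Finset.mul_sum]
    _ = ∑ s : Fin n → Fin L, ∑ ε : Fin L → Bool,
          (∏ i, sg (ε i)) * ∏ j, sg (ε (s j)) := Finset.sum_comm
    _ = ∑ s : Fin n → Fin L, ∑ ε : Fin L → Bool,
          ∏ i, sg (ε i) ^ (cnt s i + 1) := by
        refine Finset.sum_congr rfl fun s _ => Finset.sum_congr rfl fun ε _ => ?_
        have h2 : ∏ j, sg (ε (s j)) = ∏ i, sg (ε i) ^ (cnt s i) := by
          rw [← Finset.prod_fiberwise_of_maps_to (g := s) (t := Finset.univ)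
            (fun j _ => Finset.mem_univ (s j)) (fun j => sg (ε (s j)))]
          refine Finset.prod_congr rfl fun i _ => ?_
          rw [Finset.prod_congr rfl (fun j hj => by
            rw [(Finset.mem_filter.1 hj).2]), Finset.prod_const]
          rfl
        rw [h2, ← Finset.prod_mul_distrib]
        refine Finset.prod_congr rfl fun i _ => ?_
        rw [pow_succ]; ring
    _ = ∑ s : Fin n → Fin L, ∏ i : Fin L, ∑ b : Bool, sg b ^ (cnt s i + 1) := by
        refine Finset.sum_congr rfl fun s _ => ?_
        rw [Finset.prod_univ_sum, Fintype.piFinset_univ]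
    _ = ∑ s : Fin n → Fin L,
          ∏ i : Fin L, (if Odd (cnt s i) then (2:ℝ) else 0) := by
        refine Finset.sum_congr rfl fun s _ => Finset.prod_congr rfl fun i _ => ?_
        rcases Nat.even_or_odd (cnt s i) with h | h
        · have : ¬ Odd (cnt s i) := by simpa [Nat.not_odd_iff_even]
          rw [if_neg this]
          have : Odd (cnt s i + 1) := Even.add_one h
          simp [sg, Odd.neg_one_pow this]
        · rw [if_pos h]
          have : Even (cnt s i + 1) := Odd.add_one h
          simp [sg, Even.neg_one_pow this]
    _ = ∑ s : Fin n → Fin L,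
          (if (∀ i, Odd (cnt s i)) then (2:ℝ) ^ L else 0) := by
        refine Finset.sum_congr rfl fun s _ => ?_
        by_cases h : ∀ i, Odd (cnt s i)
        · rw [if_pos h]
          rw [Finset.prod_congr rfl (fun i _ => if_pos (h i)), Finset.prod_const]
          simp
        · rw [if_neg h]
          push_neg at h
          obtain ⟨i, hi⟩ := h
          exact Finset.prod_eq_zero (Finset.mem_univ i) (if_neg hi)
    _ = 2 ^ L * (Wt L n : ℝ) := by
        rw [Finset.sum_ite, Finset.sum_const, Finset.sum_const_zero, add_zero,
          nsmul_eq_mul]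
        rw [Wt, Nat.card_eq_fintype_card, Fintype.card_subtype]
        ring

/-- The index flipped at step `j` of a path. -/
noncomputable def sOf {L n : ℕ} (f : Fin (n+1) → Fin L → Bool)
    (hf : ∀ j : Fin n, ∃! i, f j.castSucc i ≠ f j.succ i) (j : Fin n) : Fin L :=
  (hf j).exists.choose

lemma sOf_spec {L n : ℕ} (f : Fin (n+1) → Fin L → Bool)
    (hf : ∀ j : Fin n, ∃! i, f j.castSucc i ≠ f j.succ i) (j : Fin n) :
    f j.castSucc (sOf f hf j) ≠ f j.succ (sOf f hf j) :=
  (hf j).exists.choose_spec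

lemma step_eq {L n : ℕ} (f : Fin (n+1) → Fin L → Bool)
    (hf : ∀ j : Fin n, ∃! i, f j.castSucc i ≠ f j.succ i) (j : Fin n) (i : Fin L) :
    f j.succ i = if i = sOf f hf j then !(f j.castSucc i) else f j.castSucc i := by
  by_cases h : i = sOf f hf j
  · subst h
    rw [if_pos rfl]
    have h2 := sOf_spec f hf j
    revert h2
    generalize f j.castSucc (sOf f hf j) = a
    generalize f j.succ (sOf f hf j) = b
    cases a <;> cases b <;> simp
  · rw [if_neg h]
    by_contra hne
    exact h ((hf j).unique (Ne.symm hne) (sOf_spec f hf j))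

lemma parity_at {L n : ℕ} (f : Fin (n+1) → Fin L → Bool)
    (hf : ∀ j : Fin n, ∃! i, f j.castSucc i ≠ f j.succ i)
    (h0 : f 0 = (fun _ => false)) :
    ∀ k (hk : k ≤ n) (i : Fin L),
      (f ⟨k, Nat.lt_succ_of_le hk⟩ i = true ↔
        Odd ((Finset.univ.filter
          (fun j : Fin n => (j:ℕ) < k ∧ sOf f hf j = i)).card)) := by
  intro k
  induction k with
  | zero =>
    intro hk i
    have h00 : (⟨0, Nat.lt_succ_of_le hk⟩ : Fin (n+1)) = 0 := rfl
    rw [h00, h0]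
    simp
  | succ k ih =>
    intro hk i
    have hkn : k < n := hk
    set jk : Fin n := ⟨k, hkn⟩ with hjk
    have hsucc : (⟨k+1, Nat.lt_succ_of_le hk⟩ : Fin (n+1)) = jk.succ := rfl
    have hcast : (⟨k, Nat.lt_succ_of_le (Nat.le_of_lt hkn)⟩ : Fin (n+1)) = jk.castSucc := rfl
    have hcard : (Finset.univ.filter
          (fun j : Fin n => (j:ℕ) < k+1 ∧ sOf f hf j = i)).card
        = (Finset.univ.filter
          (fun j : Fin n => (j:ℕ) < k ∧ sOf f hf j = i)).card
          + (if sOf f hf jk = i then 1 else 0) := by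
      by_cases hs : sOf f hf jk = i
      · rw [if_pos hs]
        have hset : (Finset.univ.filter
              (fun j : Fin n => (j:ℕ) < k+1 ∧ sOf f hf j = i))
            = insert jk (Finset.univ.filter
              (fun j : Fin n => (j:ℕ) < k ∧ sOf f hf j = i)) := by
          ext j
          simp only [Finset.mem_insert, Finset.mem_filter, Finset.mem_univ, true_and]
          constructor
          · rintro ⟨h1, h2⟩
            rcases Nat.lt_succ_iff_lt_or_eq.1 h1 with h | h
            · exact Or.inr ⟨h, h2⟩
            · exact Or.inl (Fin.ext h)
          · rintro (rfl | ⟨h1, h2⟩)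
            · exact ⟨Nat.lt_succ_self _, hs⟩
            · exact ⟨Nat.lt_succ_of_lt h1, h2⟩
        rw [hset, Finset.card_insert_of_notMem]
        simp [hjk]
      · rw [if_neg hs, add_zero]
        congr 1
        ext j
        simp only [Finset.mem_filter, Finset.mem_univ, true_and]
        constructor
        · rintro ⟨h1, h2⟩
          rcases Nat.lt_succ_iff_lt_or_eq.1 h1 with h | h
          · exact ⟨h, h2⟩
          · exact absurd h2 (by rw [show j = jk from Fin.ext h]; exact hs)
        · rintro ⟨h1, h2⟩
          exact ⟨Nat.lt_succ_of_lt h1, h2⟩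
    rw [hsucc, step_eq f hf jk i, hcard]
    have ihk := ih (Nat.le_of_lt hkn) i
    rw [hcast] at ihk
    by_cases hs : sOf f hf jk = i
    · rw [if_pos hs.symm, if_pos hs, Nat.odd_add_one]
      rw [Bool.not_eq_true']
      rw [← Bool.not_eq_true]
      tauto
    · rw [if_neg (fun h => hs h.symm), if_neg hs, add_zero]
      exact ihk

lemma parity_total {L n : ℕ} (f : Fin (n+1) → Fin L → Bool)
    (hf : ∀ j : Fin n, ∃! i, f j.castSucc i ≠ f j.succ i)
    (h0 : f 0 = (fun _ => false)) (h1 : f (Fin.last n) = (fun _ => true)) :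
    ∀ i, Odd (cnt (sOf f hf) i) := by
  intro i
  have := (parity_at f hf h0 n le_rfl i).1
  have hlast : (⟨n, Nat.lt_succ_of_le le_rfl⟩ : Fin (n+1)) = Fin.last n := rfl
  rw [hlast, h1] at this
  have hodd := this rfl
  have hset : (Finset.univ.filter (fun j : Fin n => (j:ℕ) < n ∧ sOf f hf j = i))
      = Finset.univ.filter (fun j : Fin n => sOf f hf j = i) := by
    ext j
    simp [j.isLt]
  rwa [hset] at hodd

lemma path_determined {L n : ℕ} (f g : Fin (n+1) → Fin L → Bool)
    (hf : ∀ j : Fin n, ∃! i, f j.castSucc i ≠ f j.succ i)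
    (hg : ∀ j : Fin n, ∃! i, g j.castSucc i ≠ g j.succ i)
    (h0f : f 0 = (fun _ => false)) (h0g : g 0 = (fun _ => false))
    (hs : sOf f hf = sOf g hg) : f = g := by
  have key : ∀ k (hk : k < n+1), f ⟨k, hk⟩ = g ⟨k, hk⟩ := by
    intro k
    induction k with
    | zero =>
      intro hk
      have : (⟨0, hk⟩ : Fin (n+1)) = 0 := rfl
      rw [this, h0f, h0g]
    | succ k ih =>
      intro hk
      have hkn : k < n := Nat.lt_of_succ_lt_succ hk
      set jk : Fin n := ⟨k, hkn⟩ with hjk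
      have hsucc : (⟨k+1, hk⟩ : Fin (n+1)) = jk.succ := rfl
      have hcast : (⟨k, Nat.lt_of_succ_lt hk⟩ : Fin (n+1)) = jk.castSucc := rfl
      funext i
      rw [hsucc, step_eq f hf jk i, step_eq g hg jk i, hs, ← hcast,
        ih (Nat.lt_of_succ_lt hk)]
  funext k
  have := key k.1 k.2
  rwa [Fin.eta] at this

lemma A_le_Wt (L p : ℕ) : A L p ≤ Wt L (L + 2*p) := by
  set n := L + 2*p with hn
  have hadj : ∀ (f : {f : Fin (n+1) → Fin L → Bool //
      IsSAPath n f ∧ f 0 = (fun _ => false) ∧ f (Fin.last n) = (fun _ => true)}),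
      ∀ j : Fin n, ∃! i, f.1 j.castSucc i ≠ f.1 j.succ i :=
    fun f j => f.2.1.2 j
  refine Nat.card_le_card_of_injective
    (fun f => ⟨sOf f.1 (hadj f), parity_total f.1 (hadj f) f.2.2.1 f.2.2.2⟩) ?_
  rintro ⟨f, hf⟩ ⟨g, hg⟩ h
  simp only [Subtype.mk.injEq] at h ⊢
  exact path_determined f g _ _ hf.2.1 hg.2.1 h

lemma exp_tsum (t : ℝ) : Real.exp t = ∑' m : ℕ, t ^ m / m.factorial := by
  rw [Real.exp_eq_exp_ℝ, NormedSpace.exp_eq_tsum_div]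

lemma summable_aux (a t c : ℝ) :
    Summable (fun m : ℕ => c * a ^ (m+1) * t ^ m / m.factorial) := by
  have h : ∀ m : ℕ, c * a ^ (m+1) * t ^ m / m.factorial
      = (c * a) * ((a*t) ^ m / m.factorial) := by
    intro m
    rw [pow_succ, mul_pow]
    ring
  simpa [funext h] using (Real.summable_pow_div_factorial (a*t)).mul_left (c * a)

lemma tsum_aux (a t c : ℝ) :
    ∑' m : ℕ, c * a ^ (m+1) * t ^ m / m.factorial = c * a * Real.exp (a * t) := by
  have h : ∀ m : ℕ, c * a ^ (m+1) * t ^ m / m.factorial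
      = (c * a) * ((a*t) ^ m / m.factorial) := by
    intro m
    rw [pow_succ, mul_pow]
    ring
  rw [funext h, tsum_mul_left, exp_tsum]

lemma sinh_pow_eq (L : ℕ) (t : ℝ) :
    Real.sinh t ^ L = (2:ℝ)⁻¹ ^ L *
      ∑ ε : Fin L → Bool, (∏ i, sg (ε i)) * Real.exp ((∑ i, sg (ε i)) * t) := by
  have h1 : Real.sinh t = 2⁻¹ * ∑ b : Bool, sg b * Real.exp (sg b * t) := by
    rw [Real.sinh_eq]
    simp [sg]
    ring
  rw [h1, mul_pow, Finset.sum_pow', Fintype.piFinset_univ]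
  congr 1
  refine Finset.sum_congr rfl fun ε _ => ?_
  rw [Finset.prod_mul_distrib, ← Real.exp_sum, ← Finset.sum_mul]

lemma deriv_identity (L : ℕ) (t : ℝ) :
    (L:ℝ) * Real.sinh t ^ (L-1) * Real.cosh t = (2:ℝ)⁻¹ ^ L *
      ∑ ε : Fin L → Bool, (∏ i, sg (ε i)) * (∑ i, sg (ε i))
        * Real.exp ((∑ i, sg (ε i)) * t) := by
  have h1 : HasDerivAt (fun u => Real.sinh u ^ L)
      ((L:ℝ) * Real.sinh t ^ (L-1) * Real.cosh t) t :=
    (Real.hasDerivAt_sinh t).pow L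
  have h2 : HasDerivAt (fun u => (2:ℝ)⁻¹ ^ L *
      ∑ ε : Fin L → Bool, (∏ i, sg (ε i)) * Real.exp ((∑ i, sg (ε i)) * u))
      ((2:ℝ)⁻¹ ^ L * ∑ ε : Fin L → Bool,
        (∏ i, sg (ε i)) * (∑ i, sg (ε i)) * Real.exp ((∑ i, sg (ε i)) * t)) t := by
    refine HasDerivAt.const_mul _ ?_
    have h3 : ∀ ε : Fin L → Bool,
        HasDerivAt (fun u => (∏ i, sg (ε i)) * Real.exp ((∑ i, sg (ε i)) * u))
          ((∏ i, sg (ε i)) * (∑ i, sg (ε i)) * Real.exp ((∑ i, sg (ε i)) * t)) t := by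
      intro ε
      have : HasDerivAt (fun u => Real.exp ((∑ i, sg (ε i)) * u))
          (Real.exp ((∑ i, sg (ε i)) * t) * (∑ i, sg (ε i))) t := by
        simpa using ((hasDerivAt_id t).const_mul (∑ i, sg (ε i))).exp
      have := this.const_mul (∏ i, sg (ε i))
      rw [show (∏ i, sg (ε i)) * (∑ i, sg (ε i)) * Real.exp ((∑ i, sg (ε i)) * t)
          = (∏ i, sg (ε i)) * (Real.exp ((∑ i, sg (ε i)) * t) * (∑ i, sg (ε i))) by ring]
      exact this
    exact HasDerivAt.fun_sum (u := (Finset.univ : Finset (Fin L → Bool)))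
      (fun ε _ => h3 ε)
  have h1' : HasDerivAt (fun u => Real.sinh u ^ L)
      ((2:ℝ)⁻¹ ^ L * ∑ ε : Fin L → Bool,
        (∏ i, sg (ε i)) * (∑ i, sg (ε i)) * Real.exp ((∑ i, sg (ε i)) * t)) t := by
    have hfun : (fun u => Real.sinh u ^ L) = (fun u => (2:ℝ)⁻¹ ^ L *
        ∑ ε : Fin L → Bool, (∏ i, sg (ε i)) * Real.exp ((∑ i, sg (ε i)) * u)) :=
      funext fun u => sinh_pow_eq L u
    rw [hfun]
    exact h2
  exact h1.unique h1'

lemma Wt_le_pow (L n : ℕ) : Wt L n ≤ L ^ n := by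
  have h1 : Wt L n ≤ Nat.card (Fin n → Fin L) :=
    Nat.card_le_card_of_injective Subtype.val Subtype.val_injective
  simpa [Nat.card_eq_fintype_card] using h1

/-- The expected number of open paths,
`E^x[Θ] = ∑_p A_{L,p} (1-x)^{L+2p-1}/(L+2p-1)!`, satisfies
`E^x[Θ] ≤ L · sinh(1-x)^L · cosh(1-x)/sinh(1-x)`. -/
theorem stmt7 (L : ℕ) (hL : 1 ≤ L) (x : ℝ) (hx : x ∈ Set.Ico (0:ℝ) 1) :
    ∑' p : ℕ, (A L p : ℝ) * (1 - x) ^ (L + 2*p - 1) / (L + 2*p - 1).factorial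
      ≤ L * Real.sinh (1-x) ^ L * (Real.cosh (1-x) / Real.sinh (1-x)) := by
  obtain ⟨hx0, hx1⟩ := hx
  set y : ℝ := 1 - x with hy
  have hy0 : 0 < y := by simp [hy]; linarith
  set g : ℕ → ℝ := fun m => (Wt L (m+1) : ℝ) * y ^ m / m.factorial with hg
  have hg_nonneg : ∀ m, 0 ≤ g m := by
    intro m
    apply div_nonneg
    · positivity
    · positivity
  have hg_le : ∀ m, g m ≤ (L:ℝ) ^ (m+1) * y ^ m / m.factorial := by
    intro m
    apply div_le_div_of_nonneg_right _ (by positivity)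
    apply mul_le_mul_of_nonneg_right _ (by positivity)
    exact_mod_cast Nat.cast_le.2 (Wt_le_pow L (m+1))
  have hg_sum : Summable g := by
    refine Summable.of_nonneg_of_le hg_nonneg hg_le ?_
    simpa using summable_aux (L:ℝ) y 1
  -- value of the tsum of g
  have hg_val : ∑' m, g m = (L:ℝ) * Real.sinh y ^ (L-1) * Real.cosh y := by
    have hterm : ∀ m : ℕ, g m = ∑ ε : Fin L → Bool,
        ((2:ℝ)⁻¹ ^ L * ∏ i, sg (ε i)) * (∑ i, sg (ε i)) ^ (m+1)
          * y ^ m / m.factorial := by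
      intro m
      have hk := key1 L (m+1)
      have hW : (Wt L (m+1) : ℝ) = (2:ℝ)⁻¹ ^ L *
          ∑ ε : Fin L → Bool, (∏ i, sg (ε i)) * (∑ i, sg (ε i)) ^ (m+1) := by
        rw [hk]
        rw [← mul_assoc, ← mul_pow]
        norm_num
      simp only [hg, hW, Finset.mul_sum, Finset.sum_div, Finset.sum_mul]
      refine Finset.sum_congr rfl fun ε _ => ?_
      ring
    rw [funext hterm]
    rw [Summable.tsum_finsetSum (fun ε _ => summable_aux _ y _)]
    have hterm2 : ∀ ε : Fin L → Bool,
        ∑' m : ℕ, ((2:ℝ)⁻¹ ^ L * ∏ i, sg (ε i)) * (∑ i, sg (ε i)) ^ (m+1)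
            * y ^ m / m.factorial
          = (2:ℝ)⁻¹ ^ L * ((∏ i, sg (ε i)) * (∑ i, sg (ε i))
            * Real.exp ((∑ i, sg (ε i)) * y)) := by
      intro ε
      rw [tsum_aux]
      ring
    rw [Finset.sum_congr rfl (fun ε _ => hterm2 ε), ← Finset.mul_sum]
    rw [← deriv_identity L y]
  -- comparison of the two series
  have hmain : ∑' p : ℕ, (A L p : ℝ) * y ^ (L + 2*p - 1) / (L + 2*p - 1).factorial
      ≤ ∑' m, g m := by
    set e : ℕ → ℕ := fun p => (L - 1) + 2*p with he
    have hinj : Function.Injective e := by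
      intro a b hab
      simp only [he] at hab
      omega
    have hle : ∀ p : ℕ, (A L p : ℝ) * y ^ (L + 2*p - 1) / (L + 2*p - 1).factorial
        ≤ g (e p) := by
      intro p
      have h1 : L + 2*p - 1 = (L-1) + 2*p := by omega
      have h2 : (L-1) + 2*p + 1 = L + 2*p := by omega
      simp only [hg, he, h1, h2]
      apply div_le_div_of_nonneg_right _ (by positivity)
      apply mul_le_mul_of_nonneg_right _ (by positivity)
      exact_mod_cast Nat.cast_le.2 (A_le_Wt L p)
    have hfs : Summable (fun p : ℕ =>
        (A L p : ℝ) * y ^ (L + 2*p - 1) / (L + 2*p - 1).factorial) := by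
      refine Summable.of_nonneg_of_le (fun p => by positivity) hle ?_
      exact hg_sum.comp_injective hinj
    exact Summable.tsum_le_tsum_of_inj e hinj (fun c _ => hg_nonneg c) hle hfs hg_sum
  rw [hg_val] at hmain
  refine hmain.trans (le_of_eq ?_)
  have hsinh : Real.sinh y ≠ 0 := ne_of_gt (Real.sinh_pos_iff.2 hy0)
  have hpow : Real.sinh y ^ L = Real.sinh y ^ (L-1) * Real.sinh y := by
    rw [← pow_succ]
    congr 1
    omega
  rw [hpow]
  field_simp
end

section
/- With N_{L,p} defined by the recurrence N_{1,p} = [p=0] and N_{L+1,p} = sum over q from 0 to p of binomial(L+1+2p-2q, 2q+1) * N_{L,p-q}, we have N_{L,p} <= A_{L,p}, where A_{L,p} is the number of self-avoiding paths of length L+2p from all-zeros to all-ones in the L-hypercube. -/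
/-- `N_{1,p} = [p=0]`, `N_{L+1,p} = ∑_{q=0}^p binom(L+1+2p-2q, 2q+1) N_{L,p-q}`. -/
def Nrec : ℕ → ℕ → ℕ
  | 0, _ => 0
  | 1, p => if p = 0 then 1 else 0
  | (L+2), p => ∑ q ∈ Finset.range (p+1),
      ((L+2) + 2*p - 2*q).choose (2*q + 1) * Nrec (L+1) (p - q)

namespace SAW

/-- number of elements of `S` below `i` -/
def rk (S : Finset ℕ) (i : ℕ) : ℕ := (S.filter (fun t => t < i)).card
/-- position in the extended path of the toggle at gap `s` -/
def ps (S : Finset ℕ) (s : ℕ) : ℕ := s + rk S s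
/-- number of toggles strictly before extended position `j` -/
def bc (S : Finset ℕ) (j : ℕ) : ℕ := (S.filter (fun s => ps S s < j)).card

lemma rk_mono (S : Finset ℕ) {i i' : ℕ} (h : i ≤ i') : rk S i ≤ rk S i' := by
  apply Finset.card_le_card
  intro t ht
  simp only [Finset.mem_filter] at *
  exact ⟨ht.1, by omega⟩

lemma rk_le_card (S : Finset ℕ) (i : ℕ) : rk S i ≤ S.card :=
  Finset.card_le_card (Finset.filter_subset _ _)

lemma rk_lt_rk {S : Finset ℕ} {s i : ℕ} (hs : s ∈ S) (h : s < i) : rk S s < rk S i := by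
  apply Finset.card_lt_card
  have hsub : S.filter (fun t => t < s) ⊆ S.filter (fun t => t < i) := by
    intro t ht
    simp only [Finset.mem_filter] at *
    exact ⟨ht.1, by omega⟩
  rw [Finset.ssubset_iff_of_subset hsub]
  exact ⟨s, Finset.mem_filter.mpr ⟨hs, h⟩, by simp⟩

lemma ps_gap {S : Finset ℕ} {s s' : ℕ} (hs : s ∈ S) (h : s < s') : ps S s + 2 ≤ ps S s' := by
  have := rk_lt_rk hs h
  unfold ps; omega

lemma bc_zero (S : Finset ℕ) : bc S 0 = 0 := by
  simp [bc]

lemma bc_mono (S : Finset ℕ) {j j' : ℕ} (h : j ≤ j') : bc S j ≤ bc S j' := by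
  apply Finset.card_le_card
  intro t ht
  simp only [Finset.mem_filter] at *
  exact ⟨ht.1, by omega⟩

lemma bc_le_card (S : Finset ℕ) (j : ℕ) : bc S j ≤ S.card :=
  Finset.card_le_card (Finset.filter_subset _ _)

lemma window_card {S : Finset ℕ} {j m : ℕ} (hm : m ≤ 2) :
    (S.filter (fun s => j ≤ ps S s ∧ ps S s < j + m)).card ≤ 1 := by
  apply Finset.card_le_one.mpr
  intro a ha b hb
  simp only [Finset.mem_filter] at ha hb
  by_contra hne
  rcases lt_or_gt_of_ne hne with h | h
  · have := ps_gap ha.1 h; omega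
  · have := ps_gap hb.1 h; omega

lemma bc_add_le {S : Finset ℕ} {j m : ℕ} (hm : m = 1 ∨ m = 2) :
    bc S (j + m) ≤ bc S j + 1 := by
  have hsub : S.filter (fun s => ps S s < j + m) ⊆
      S.filter (fun s => ps S s < j) ∪ S.filter (fun s => j ≤ ps S s ∧ ps S s < j + m) := by
    intro t ht
    simp only [Finset.mem_filter, Finset.mem_union] at *
    obtain ⟨h1, h2⟩ := ht
    by_cases hc : ps S t < j
    · exact Or.inl ⟨h1, hc⟩
    · exact Or.inr ⟨h1, by omega, h2⟩
  calc bc S (j + m) ≤ _ := Finset.card_le_card hsub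
    _ ≤ _ + _ := Finset.card_union_le _ _
    _ ≤ bc S j + 1 := by
        have := window_card (S := S) (j := j) (m := m) (by omega)
        exact Nat.add_le_add le_rfl this

lemma bc_add (S : Finset ℕ) : ∀ d j, bc S (j + d) ≤ bc S j + (d + 1) / 2 := by
  intro d
  induction d using Nat.strong_induction_on with
  | _ d ih =>
    match d with
    | 0 => intro j; simp
    | 1 => intro j; simpa using bc_add_le (S := S) (j := j) (Or.inl rfl)
    | (d+2) =>
      intro j
      have h1 := ih d (by omega) (j + 2)
      have h2 : bc S (j + 2) ≤ bc S j + 1 := bc_add_le (Or.inr rfl)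
      have he : j + (d + 2) = (j + 2) + d := by omega
      rw [he]
      omega

lemma bc_le_self (S : Finset ℕ) (j : ℕ) : bc S j ≤ j := by
  have h1 := bc_add S j 0
  rw [Nat.zero_add, bc_zero] at h1
  omega

lemma bc_top {S : Finset ℕ} {n : ℕ} (hS : ∀ s ∈ S, s ≤ n) :
    bc S (n + S.card) = S.card := by
  rcases Finset.eq_empty_or_nonempty S with rfl | ⟨s0, hs0⟩
  · simp [bc]
  · have hcard : 1 ≤ S.card := Finset.card_pos.mpr ⟨s0, hs0⟩
    unfold bc
    rw [Finset.filter_true_of_mem]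
    intro s hs
    have h1 : rk S s ≤ S.card - 1 := by
      have : S.filter (fun t => t < s) ⊆ S.erase s := by
        intro t ht
        simp only [Finset.mem_filter, Finset.mem_erase] at *
        exact ⟨by omega, ht.1⟩
      have := Finset.card_le_card this
      rw [Finset.card_erase_of_mem hs] at this
      exact this
    have := hS s hs
    unfold ps; omega

lemma bc_at_rk (S : Finset ℕ) (i : ℕ) : bc S (i + rk S i) = rk S i := by
  unfold bc
  congr 1
  apply Finset.filter_congr
  intro s hs
  constructor
  · intro h
    by_contra hge
    have h1 : rk S i ≤ rk S s := rk_mono S (by omega)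
    unfold ps at h; omega
  · intro h
    have h1 : rk S s < rk S i := rk_lt_rk hs h
    unfold ps; omega

lemma bc_at_rk_succ {S : Finset ℕ} {s : ℕ} (hs : s ∈ S) :
    bc S (s + rk S s + 1) = rk S s + 1 := by
  have hle : bc S (s + rk S s + 1) ≤ rk S s + 1 := by
    have := bc_add_le (S := S) (j := s + rk S s) (Or.inl rfl)
    rw [bc_at_rk] at this
    exact this
  have hge : rk S s + 1 ≤ bc S (s + rk S s + 1) := by
    have hins : insert s (S.filter (fun t => ps S t < s + rk S s)) ⊆
        S.filter (fun t => ps S t < s + rk S s + 1) := by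
      intro t ht
      rcases Finset.mem_insert.mp ht with rfl | ht
      · exact Finset.mem_filter.mpr ⟨hs, by unfold ps; omega⟩
      · simp only [Finset.mem_filter] at ht ⊢
        exact ⟨ht.1, by omega⟩
    have hnot : s ∉ S.filter (fun t => ps S t < s + rk S s) := by
      intro h
      rw [Finset.mem_filter] at h
      exact absurd h.2 (by unfold ps; omega)
    have := Finset.card_le_card hins
    rw [Finset.card_insert_of_notMem hnot] at this
    have hbc : (S.filter (fun t => ps S t < s + rk S s)).card = rk S s := bc_at_rk S s
    unfold bc; omega
  omega

lemma bc_reverse {S : Finset ℕ} {j : ℕ} (h : bc S (j+1) = bc S j + 1) :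
    ∃ s ∈ S, ps S s = j ∧ j - bc S j = s := by
  have hsub : S.filter (fun s => ps S s < j) ⊆ S.filter (fun s => ps S s < j + 1) := by
    intro t ht
    simp only [Finset.mem_filter] at *
    exact ⟨ht.1, by omega⟩
  have hss : S.filter (fun s => ps S s < j) ⊂ S.filter (fun s => ps S s < j + 1) := by
    refine lt_of_le_of_ne hsub ?_
    intro heq
    have hbc : bc S (j+1) = bc S j := by unfold bc; rw [heq]
    omega
  obtain ⟨s, hs1, hs2⟩ := Finset.exists_of_ssubset hss
  simp only [Finset.mem_filter, not_and] at hs1 hs2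
  have h2 := hs2 hs1.1
  have hps : ps S s = j := by omega
  refine ⟨s, hs1.1, hps, ?_⟩
  have hbc : bc S j = rk S s := by
    rw [← hps]
    show bc S (s + rk S s) = rk S s
    exact bc_at_rk S s
  unfold ps at hps
  omega

end SAW
namespace SAW

/-- extend `f` to all of `ℕ` -/
def Fx (M n : ℕ) (f : Fin (n+1) → Fin M → Bool) (i : ℕ) : Fin M → Bool :=
  f ⟨min i n, by omega⟩

/-- the extended path on the `(M+1)`-cube -/
def G (M n : ℕ) (f : Fin (n+1) → Fin M → Bool) (S : Finset ℕ) (j : ℕ) :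
    Fin (M+1) → Bool :=
  fun i => if h : (i : ℕ) < M then Fx M n f (j - bc S j) ⟨i, h⟩
           else decide (Odd (bc S j))

lemma a_mono (S : Finset ℕ) {j j' : ℕ} (h : j ≤ j') :
    j - bc S j ≤ j' - bc S j' := by
  have h1 := bc_mono S h
  have h2 := bc_add S (j' - j) j
  rw [show j + (j' - j) = j' from by omega] at h2
  have h3 := bc_le_self S j
  omega

lemma a_top {S : Finset ℕ} {n : ℕ} (hS : ∀ s ∈ S, s ≤ n) :
    (n + S.card) - bc S (n + S.card) = n := by
  rw [bc_top hS]; omega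

lemma a_le {S : Finset ℕ} {n T j : ℕ} (hS : ∀ s ∈ S, s ≤ n)
    (hT : n + S.card = T) (hj : j ≤ T) : j - bc S j ≤ n := by
  have h1 := a_mono S (j' := T) hj
  rw [← hT, a_top hS] at h1
  exact h1

lemma G_lt {M n : ℕ} {f : Fin (n+1) → Fin M → Bool} {S : Finset ℕ} {j : ℕ}
    (hj : j - bc S j ≤ n) {i : Fin (M+1)} (h : (i : ℕ) < M) :
    G M n f S j i = f ⟨j - bc S j, by omega⟩ ⟨i, h⟩ := by
  simp only [G, dif_pos h, Fx]
  congr 1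
  exact Fin.ext (by simp [min_eq_left hj])

lemma G_last {M n : ℕ} {f : Fin (n+1) → Fin M → Bool} {S : Finset ℕ} {j : ℕ} :
    G M n f S j (Fin.last M) = decide (Odd (bc S j)) := by
  simp [G]

lemma bc_step (S : Finset ℕ) (j : ℕ) :
    bc S (j+1) = bc S j ∨ bc S (j+1) = bc S j + 1 := by
  have h1 := bc_mono S (show j ≤ j + 1 by omega)
  have h2 := bc_add_le (S := S) (j := j) (Or.inl rfl)
  omega

lemma G_inj_aux {M n T : ℕ} {f : Fin (n+1) → Fin M → Bool} {S : Finset ℕ}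
    (hf : Function.Injective f) (hS : ∀ s ∈ S, s ≤ n) (hT : n + S.card = T)
    {j j' : ℕ} (hj : j ≤ T) (hj' : j' ≤ T) (hle : j ≤ j')
    (hG : G M n f S j = G M n f S j') : j = j' := by
  have haj : j - bc S j ≤ n := a_le hS hT hj
  have haj' : j' - bc S j' ≤ n := a_le hS hT hj'
  have hpar : Odd (bc S j) ↔ Odd (bc S j') := by
    have h := congrFun hG (Fin.last M)
    rw [G_last, G_last] at h
    simpa using h
  have hfa : f ⟨j - bc S j, by omega⟩ = f ⟨j' - bc S j', by omega⟩ := by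
    funext i
    have h := congrFun hG (Fin.castSucc i)
    rw [G_lt haj i.isLt, G_lt haj' i.isLt] at h
    simpa using h
  have ha : j - bc S j = j' - bc S j' := by
    have := congrArg Fin.val (hf hfa)
    simpa using this
  have hb1 := bc_le_self S j
  have hb2 := bc_le_self S j'
  have hb3 := bc_mono S hle
  have hd : bc S j' = bc S j + (j' - j) := by omega
  have h6 := bc_add S (j' - j) j
  rw [show j + (j' - j) = j' from by omega] at h6
  rw [Nat.odd_iff, Nat.odd_iff] at hpar
  omega

lemma G_inj {M n T : ℕ} {f : Fin (n+1) → Fin M → Bool} {S : Finset ℕ}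
    (hf : Function.Injective f) (hS : ∀ s ∈ S, s ≤ n) (hT : n + S.card = T)
    {j j' : ℕ} (hj : j ≤ T) (hj' : j' ≤ T)
    (hG : G M n f S j = G M n f S j') : j = j' := by
  rcases le_total j j' with h | h
  · exact G_inj_aux hf hS hT hj hj' h hG
  · exact (G_inj_aux hf hS hT hj' hj h hG.symm).symm

lemma G_adj {M n T : ℕ} {f : Fin (n+1) → Fin M → Bool} {S : Finset ℕ}
    (hf : IsSAPath n f) (hS : ∀ s ∈ S, s ≤ n) (hT : n + S.card = T)
    {j : ℕ} (hj : j < T) :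
    ∃! i : Fin (M+1), G M n f S j i ≠ G M n f S (j+1) i := by
  have haj : j - bc S j ≤ n := a_le hS hT (by omega)
  have haj' : (j+1) - bc S (j+1) ≤ n := a_le hS hT (by omega)
  have hb1 := bc_le_self S j
  rcases bc_step S j with hstep | hstep
  · -- base step: first coords move
    have ha : (j+1) - bc S (j+1) = (j - bc S j) + 1 := by omega
    have hlt : j - bc S j < n := by omega
    obtain ⟨i0, hi0, hi0u⟩ := hf.2 ⟨j - bc S j, hlt⟩
    refine ⟨Fin.castSucc i0, ?_, ?_⟩
    · show G M n f S j (Fin.castSucc i0) ≠ G M n f S (j+1) (Fin.castSucc i0)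
      have e1 : G M n f S j (Fin.castSucc i0) = f ⟨j - bc S j, by omega⟩ ⟨i0, i0.isLt⟩ :=
        G_lt haj i0.isLt
      have e2 : G M n f S (j+1) (Fin.castSucc i0)
          = f ⟨(j+1) - bc S (j+1), by omega⟩ ⟨i0, i0.isLt⟩ := G_lt haj' i0.isLt
      rw [e1, e2]
      intro hcon
      apply hi0
      have hc1 : (Fin.castSucc (⟨j - bc S j, hlt⟩ : Fin n)) = ⟨j - bc S j, by omega⟩ :=
        Fin.ext rfl
      have hc2 : (Fin.succ (⟨j - bc S j, hlt⟩ : Fin n)) = ⟨(j+1) - bc S (j+1), by omega⟩ :=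
        Fin.ext (by simp [ha])
      rw [hc1, hc2]
      have : (⟨(i0 : ℕ), i0.isLt⟩ : Fin M) = i0 := Fin.ext rfl
      rw [this] at hcon
      exact hcon
    · intro i hi
      by_cases hiM : (i : ℕ) < M
      · have e1 := G_lt (f := f) haj hiM
        have e2 := G_lt (f := f) haj' hiM
        rw [e1, e2] at hi
        have := hi0u ⟨i, hiM⟩ (by
          have hc1 : (Fin.castSucc (⟨j - bc S j, hlt⟩ : Fin n)) = ⟨j - bc S j, by omega⟩ :=
            Fin.ext rfl
          have hc2 : (Fin.succ (⟨j - bc S j, hlt⟩ : Fin n)) = ⟨(j+1) - bc S (j+1), by omega⟩ :=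
            Fin.ext (by simp [ha])
          rw [hc1, hc2]
          exact hi)
        exact Fin.ext (by
          have := congrArg Fin.val this
          simpa using this)
      · exfalso
        have hilast : i = Fin.last M := by
          apply Fin.ext
          have := i.isLt
          simp only [Fin.val_last]
          omega
        rw [hilast, G_last, G_last, hstep] at hi
        exact hi rfl
  · -- toggle step: last coord moves
    have ha : (j+1) - bc S (j+1) = j - bc S j := by omega
    refine ⟨Fin.last M, ?_, ?_⟩
    · show G M n f S j (Fin.last M) ≠ G M n f S (j+1) (Fin.last M)
      rw [G_last, G_last, hstep]
      simp [Nat.odd_iff, Nat.succ_mod_two_eq_one_iff]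
      omega
    · intro i hi
      by_cases hiM : (i : ℕ) < M
      · exfalso
        have e1 := G_lt (f := f) haj hiM
        have e2 := G_lt (f := f) haj' hiM
        rw [e1, e2] at hi
        apply hi
        congr 1
        exact Fin.ext (by simp [ha])
      · apply Fin.ext
        have := i.isLt
        simp only [Fin.val_last]
        omega

lemma G_zero {M n : ℕ} {f : Fin (n+1) → Fin M → Bool} {S : Finset ℕ}
    (h0 : f 0 = fun _ => false) : G M n f S 0 = fun _ => false := by
  funext i
  by_cases hiM : (i : ℕ) < M
  · rw [G_lt (by simp [bc_zero]) hiM]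
    have : (⟨0 - bc S 0, by omega⟩ : Fin (n+1)) = 0 := Fin.ext (by simp [bc_zero])
    rw [this, h0]
  · simp only [G, dif_neg hiM, bc_zero]
    simp

lemma G_top {M n : ℕ} {f : Fin (n+1) → Fin M → Bool} {S : Finset ℕ}
    (h1 : f (Fin.last n) = fun _ => true) (hS : ∀ s ∈ S, s ≤ n)
    (hodd : Odd S.card) : G M n f S (n + S.card) = fun _ => true := by
  funext i
  have ha : (n + S.card) - bc S (n + S.card) = n := a_top hS
  by_cases hiM : (i : ℕ) < M
  · rw [G_lt (by omega) hiM]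
    have he : (⟨(n + S.card) - bc S (n + S.card), by omega⟩ : Fin (n+1)) = Fin.last n :=
      Fin.ext (by simp [ha])
    rw [he, h1]
  · simp only [G, dif_neg hiM, bc_top hS]
    simpa using hodd

lemma rk_lt_card {S : Finset ℕ} {s : ℕ} (hs : s ∈ S) : rk S s < S.card := by
  have hsub : S.filter (fun t => t < s) ⊆ S.erase s := by
    intro t ht
    simp only [Finset.mem_filter, Finset.mem_erase] at *
    exact ⟨by omega, ht.1⟩
  have h1 := Finset.card_le_card hsub
  rw [Finset.card_erase_of_mem hs] at h1
  have h2 : 1 ≤ S.card := Finset.card_pos.mpr ⟨s, hs⟩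
  unfold rk
  omega

/-- membership in `S` is recoverable from the function `bc S` -/
lemma mem_iff_bc {S : Finset ℕ} {n T : ℕ} (hS : ∀ s ∈ S, s ≤ n)
    (hT : n + S.card = T) (s : ℕ) :
    s ∈ S ↔ ∃ j, j < T ∧ bc S (j+1) = bc S j + 1 ∧ j - bc S j = s := by
  constructor
  · intro hs
    refine ⟨s + rk S s, ?_, ?_, ?_⟩
    · have := rk_lt_card hs
      have := hS s hs
      omega
    · rw [bc_at_rk_succ hs, bc_at_rk]
    · rw [bc_at_rk]; omega
  · rintro ⟨j, hjT, hstep, hval⟩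
    obtain ⟨s', hs', hps, hval'⟩ := bc_reverse hstep
    rw [← hval, hval']
    exact hs'

/-- the base path is recoverable from `G` -/
lemma G_recover_f {M n : ℕ} {f : Fin (n+1) → Fin M → Bool} {S : Finset ℕ}
    {i : ℕ} (hi : i ≤ n) (c : Fin M) :
    G M n f S (i + rk S i) (Fin.castSucc c) = f ⟨i, by omega⟩ c := by
  have ha : (i + rk S i) - bc S (i + rk S i) = i := by rw [bc_at_rk]; omega
  rw [G_lt (by omega) c.isLt]
  have he : (⟨(i + rk S i) - bc S (i + rk S i), by omega⟩ : Fin (n+1)) = ⟨i, by omega⟩ :=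
    Fin.ext (by simp [ha])
  rw [he]
  congr 1

/-- two parameter tuples mapping to the same `G` have the same toggle counts -/
lemma bc_eq_of_G_eq {M n n' T : ℕ} {f : Fin (n+1) → Fin M → Bool}
    {f' : Fin (n'+1) → Fin M → Bool} {S S' : Finset ℕ}
    (hT : n + S.card = T) (hT' : n' + S'.card = T)
    (hG : ∀ j, j ≤ T → G M n f S j = G M n' f' S' j) :
    ∀ j, j ≤ T → bc S j = bc S' j := by
  intro j
  induction j with
  | zero => intro _; rw [bc_zero, bc_zero]
  | succ j ih =>
    intro hj
    have hbc := ih (by omega)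
    have hpar : Odd (bc S (j+1)) ↔ Odd (bc S' (j+1)) := by
      have h := congrFun (hG (j+1) hj) (Fin.last M)
      rw [G_last, G_last] at h
      simpa using h
    have h1 := bc_step S j
    have h2 := bc_step S' j
    rw [Nat.odd_iff, Nat.odd_iff] at hpar
    omega

/-- the set of self-avoiding paths counted by `A L p` -/
def PathT (L p : ℕ) := {f : Fin (L + 2*p + 1) → Fin L → Bool //
    IsSAPath (L + 2*p) f ∧ f 0 = (fun _ => false) ∧
      f (Fin.last (L + 2*p)) = (fun _ => true)}

lemma A_eq (L p : ℕ) : A L p = Nat.card (PathT L p) := rfl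

instance (L p : ℕ) : Finite (PathT L p) := by unfold PathT; infer_instance

/-- the domain of the injection -/
def Dom (M p : ℕ) := (q : Fin (p+1)) ×
  ({S : Finset (Fin (M + 2*(p - q.val) + 1)) // S.card = 2*q.val + 1} ×
    PathT M (p - q.val))

instance (M p : ℕ) : Finite (Dom M p) := by unfold Dom; infer_instance

def Phi (M p : ℕ) (x : Dom M p) : PathT (M+1) p :=
  ⟨fun j => G M (M + 2*(p - x.1.val)) x.2.2.val (x.2.1.val.image Fin.val) j.val, by
    obtain ⟨q, Sx, fx⟩ := x
    dsimp only
    have hq : q.val ≤ p := by omega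
    have hSle : ∀ s ∈ Sx.val.image Fin.val, s ≤ M + 2*(p - q.val) := by
      intro s hs
      obtain ⟨t, _, rfl⟩ := Finset.mem_image.mp hs
      have := t.isLt; omega
    have hcard : (Sx.val.image Fin.val).card = 2*q.val + 1 := by
      rw [Finset.card_image_of_injective _ Fin.val_injective]; exact Sx.2
    have hT : (M + 2*(p - q.val)) + (Sx.val.image Fin.val).card = (M+1) + 2*p := by
      rw [hcard]; omega
    refine ⟨⟨?_, ?_⟩, ?_, ?_⟩
    · intro j j' h
      have := j.isLt
      have := j'.isLt
      exact Fin.ext (G_inj fx.2.1.1 hSle hT (by omega) (by omega) h)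
    · intro idx
      have := idx.isLt
      exact G_adj fx.2.1 hSle hT (show idx.val < (M+1)+2*p by omega)
    · simp only [Fin.val_zero]
      exact G_zero fx.2.2.1
    · simp only [Fin.val_last]
      rw [← hT]
      exact G_top fx.2.2.2 hSle (by rw [hcard]; exact ⟨q.val, by omega⟩)⟩

lemma Phi_inj (M p : ℕ) : Function.Injective (Phi M p) := by
  intro x y h
  obtain ⟨q, Sx, fx⟩ := x
  obtain ⟨q', Sx', fx'⟩ := y
  have hg := congrArg Subtype.val h
  dsimp only [Phi] at hg
  have hq : q.val ≤ p := by omega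
  have hq' : q'.val ≤ p := by omega
  have hSle : ∀ s ∈ Sx.val.image Fin.val, s ≤ M + 2*(p - q.val) := by
    intro s hs
    obtain ⟨t, _, rfl⟩ := Finset.mem_image.mp hs
    have := t.isLt; omega
  have hSle' : ∀ s ∈ Sx'.val.image Fin.val, s ≤ M + 2*(p - q'.val) := by
    intro s hs
    obtain ⟨t, _, rfl⟩ := Finset.mem_image.mp hs
    have := t.isLt; omega
  have hcard : (Sx.val.image Fin.val).card = 2*q.val + 1 := by
    rw [Finset.card_image_of_injective _ Fin.val_injective]; exact Sx.2
  have hcard' : (Sx'.val.image Fin.val).card = 2*q'.val + 1 := by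
    rw [Finset.card_image_of_injective _ Fin.val_injective]; exact Sx'.2
  have hT : (M + 2*(p - q.val)) + (Sx.val.image Fin.val).card = (M+1) + 2*p := by
    rw [hcard]; omega
  have hT' : (M + 2*(p - q'.val)) + (Sx'.val.image Fin.val).card = (M+1) + 2*p := by
    rw [hcard']; omega
  have hGj : ∀ j, j ≤ (M+1) + 2*p →
      G M (M + 2*(p - q.val)) fx.val (Sx.val.image Fin.val) j
        = G M (M + 2*(p - q'.val)) fx'.val (Sx'.val.image Fin.val) j := by
    intro j hj
    exact congrFun hg (⟨j, by omega⟩ : Fin ((M+1) + 2*p + 1))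
  have hbc := bc_eq_of_G_eq hT hT' hGj
  have hkk : (Sx.val.image Fin.val).card = (Sx'.val.image Fin.val).card := by
    have e1 : bc (Sx.val.image Fin.val) ((M+1) + 2*p) = (Sx.val.image Fin.val).card := by
      rw [← hT]; exact bc_top hSle
    have e2 : bc (Sx'.val.image Fin.val) ((M+1) + 2*p) = (Sx'.val.image Fin.val).card := by
      rw [← hT']; exact bc_top hSle'
    rw [← e1, ← e2]
    exact hbc _ le_rfl
  have hqq : q = q' := Fin.ext (by omega)
  subst hqq
  have hSnn : Sx.val.image Fin.val = Sx'.val.image Fin.val := by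
    apply Finset.ext
    intro s
    rw [mem_iff_bc hSle hT s, mem_iff_bc hSle' hT' s]
    constructor
    · rintro ⟨j, h1, h2, h3⟩
      exact ⟨j, h1, by rw [← hbc j (by omega), ← hbc (j+1) (by omega)]; exact h2,
        by rw [← hbc j (by omega)]; exact h3⟩
    · rintro ⟨j, h1, h2, h3⟩
      exact ⟨j, h1, by rw [hbc j (by omega), hbc (j+1) (by omega)]; exact h2,
        by rw [hbc j (by omega)]; exact h3⟩
  have hSxx : Sx = Sx' := by
    apply Subtype.ext
    apply Finset.ext
    intro t
    constructor
    · intro ht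
      have : (t : ℕ) ∈ Sx'.val.image Fin.val := hSnn ▸ Finset.mem_image_of_mem Fin.val ht
      obtain ⟨t', ht', he⟩ := Finset.mem_image.mp this
      rwa [← Fin.val_injective he]
    · intro ht
      have : (t : ℕ) ∈ Sx.val.image Fin.val := hSnn ▸ Finset.mem_image_of_mem Fin.val ht
      obtain ⟨t', ht', he⟩ := Finset.mem_image.mp this
      rwa [← Fin.val_injective he]
  have hfxx : fx = fx' := by
    apply Subtype.ext
    funext i c
    have hi : (i : ℕ) ≤ M + 2*(p - q.val) := by have := i.isLt; omega
    have e1 := G_recover_f (f := fx.val) (S := Sx.val.image Fin.val) hi c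
    have e2 := G_recover_f (f := fx'.val) (S := Sx'.val.image Fin.val) hi c
    have hjle : (i : ℕ) + rk (Sx.val.image Fin.val) (i : ℕ) ≤ (M+1) + 2*p := by
      have := rk_le_card (Sx.val.image Fin.val) (i : ℕ)
      omega
    have e3 := congrFun (hGj ((i : ℕ) + rk (Sx.val.image Fin.val) (i : ℕ)) hjle)
      (Fin.castSucc c)
    have hie : (⟨(i : ℕ), by omega⟩ : Fin ((M + 2*(p - q.val))+1)) = i := Fin.ext rfl
    rw [hie] at e1 e2
    rw [← hSnn] at e2 e3
    rw [← e1, ← e2]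
    exact e3
  rw [hSxx, hfxx]

lemma card_sigma' {ι : Type} [Fintype ι] (α : ι → Type) [∀ i, Finite (α i)] :
    Nat.card ((i : ι) × α i) = ∑ i, Nat.card (α i) := by
  letI : ∀ i, Fintype (α i) := fun i => Fintype.ofFinite _
  simp [Nat.card_eq_fintype_card]

lemma key (M p : ℕ) :
    ∑ q ∈ Finset.range (p+1), (M + 2*(p - q) + 1).choose (2*q + 1) * A M (p - q)
      ≤ A (M+1) p := by
  rw [← Fin.sum_univ_eq_sum_range
    (fun q => (M + 2*(p - q) + 1).choose (2*q + 1) * A M (p - q)) (p+1)]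
  have hcard := Nat.card_le_card_of_injective _ (Phi_inj M p)
  have hdom : Nat.card (Dom M p)
      = ∑ q : Fin (p+1), (M + 2*(p - q.val) + 1).choose (2*q.val + 1) * A M (p - q.val) := by
    unfold Dom
    rw [card_sigma']
    apply Finset.sum_congr rfl
    intro q _
    rw [Nat.card_prod, A_eq]
    congr 1
    rw [Nat.card_eq_fintype_card, Fintype.card_finset_len, Fintype.card_fin]
  rw [← hdom, A_eq]
  exact hcard

lemma base_one (p : ℕ) : Nrec 1 p ≤ A 1 p := by
  rcases Nat.eq_zero_or_pos p with rfl | hp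
  · show Nrec 1 0 ≤ A 1 0
    have hwit : PathT 1 0 := by
      refine ⟨fun j _ => decide ((j : ℕ) = 1), ⟨?_, ?_⟩, ?_, ?_⟩
      · intro a b hab
        have h2 : ((a : ℕ) = 1) ↔ ((b : ℕ) = 1) := by
          simpa using congrFun hab ⟨0, by omega⟩
        apply Fin.ext
        by_cases ha : (a : ℕ) = 1
        · have hb := h2.mp ha
          omega
        · have hb : (b : ℕ) ≠ 1 := fun hb' => ha (h2.mpr hb')
          have := a.isLt
          have := b.isLt
          omega
      · intro i
        have hi : (i : ℕ) = 0 := by have := i.isLt; omega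
        refine ⟨⟨0, by omega⟩, ?_, ?_⟩
        · show decide ((i.castSucc : ℕ) = 1) ≠ decide ((i.succ : ℕ) = 1)
          simp [Fin.val_succ, hi]
        · intro y _
          apply Fin.ext
          have := y.isLt
          omega
      · funext c
        show decide (((0 : Fin (1 + 2*0 + 1)) : ℕ) = 1) = false
        simp
      · funext c
        show decide (((Fin.last (1 + 2*0)) : ℕ) = 1) = true
        simp
    have : Nonempty (PathT 1 0) := ⟨hwit⟩
    have hpos : 0 < Nat.card (PathT 1 0) := Nat.card_pos
    rw [A_eq]
    have : Nrec 1 0 = 1 := rfl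
    omega
  · have h0 : Nrec 1 p = 0 := by
      have : Nrec 1 p = if p = 0 then 1 else 0 := rfl
      rw [this, if_neg (by omega)]
    omega

lemma aux_main : ∀ L, 1 ≤ L → ∀ p, Nrec L p ≤ A L p := by
  intro L
  induction L with
  | zero => intro h; exact absurd h (by omega)
  | succ L ih =>
    intro _ p
    rcases Nat.eq_zero_or_pos L with rfl | hL
    · exact base_one p
    · obtain ⟨L', rfl⟩ : ∃ L', L = L' + 1 := ⟨L - 1, by omega⟩
      have hrec : Nrec (L' + 1 + 1) p = ∑ q ∈ Finset.range (p+1),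
          ((L'+2) + 2*p - 2*q).choose (2*q + 1) * Nrec (L'+1) (p - q) := rfl
      rw [hrec]
      have step1 : ∀ q ∈ Finset.range (p+1),
          ((L'+2) + 2*p - 2*q).choose (2*q + 1) * Nrec (L'+1) (p - q)
            ≤ ((L'+1) + 2*(p - q) + 1).choose (2*q + 1) * A (L'+1) (p - q) := by
        intro q hq
        have hq' : q ≤ p := by
          have := Finset.mem_range.mp hq
          omega
        have harg : (L'+2) + 2*p - 2*q = (L'+1) + 2*(p - q) + 1 := by omega
        rw [harg]
        exact Nat.mul_le_mul_left _ (ih (by omega) (p - q))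
      calc ∑ q ∈ Finset.range (p+1),
            ((L'+2) + 2*p - 2*q).choose (2*q + 1) * Nrec (L'+1) (p - q)
          ≤ ∑ q ∈ Finset.range (p+1),
            ((L'+1) + 2*(p - q) + 1).choose (2*q + 1) * A (L'+1) (p - q) :=
          Finset.sum_le_sum step1
        _ ≤ A ((L'+1)+1) p := key (L'+1) p

end SAW

/-- `N_{L,p} ≤ A_{L,p}`. -/
theorem stmt8 (L p : ℕ) (hL : 1 ≤ L) : Nrec L p ≤ A L p :=
  SAW.aux_main L hL p
end

section
/- For integers 0 <= q <= p and L >= 1 with 2q < L+1, one has binomial(L+1+2p-2q, 2q+1) >= binomial(L+1+2p, 2q+1) * (1 - (2q+1)/(L+2))^{2q}. -/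
lemma aux9 (N k : ℕ) (hk : k ≤ N) (hN : 0 < N) (c : ℝ) (hc0 : 0 ≤ c)
    (hc : c * N ≤ (N : ℝ) - k) :
    (N.choose k : ℝ) * c ≤ ((N - 1).choose k : ℝ) := by
  have key : N * (N - 1).choose k = N.choose k * (N - k) := by
    have h1 := Nat.add_one_mul_choose_eq (N - 1) k
    have h2 := Nat.choose_succ_right_eq N k
    have h3 : N - 1 + 1 = N := by omega
    rw [h3] at h1
    rw [h1, h2]
  have hNpos : (0:ℝ) < N := by exact_mod_cast hN
  have hkey : (N : ℝ) * ((N - 1).choose k : ℝ) = (N.choose k : ℝ) * ((N : ℝ) - k) := by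
    have h := congrArg (Nat.cast : ℕ → ℝ) key
    rwa [Nat.cast_mul, Nat.cast_mul, Nat.cast_sub hk] at h
  have hcn : (0:ℝ) ≤ (N.choose k : ℝ) := Nat.cast_nonneg _
  nlinarith [hcn, mul_le_mul_of_nonneg_left hc hcn]

/-- For `0 ≤ q ≤ p`, `L ≥ 1`, `2q < L+1`:
`binom(L+1+2p-2q, 2q+1) ≥ binom(L+1+2p, 2q+1) (1 - (2q+1)/(L+2))^{2q}`. -/
theorem stmt9 (L p q : ℕ) (hL : 1 ≤ L) (hqp : q ≤ p) (hq : 2*q < L + 1) :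
    ((L + 1 + 2*p).choose (2*q + 1) : ℝ) * (1 - (2*q + 1 : ℝ)/(L + 2)) ^ (2*q)
      ≤ ((L + 1 + 2*p - 2*q).choose (2*q + 1) : ℝ) := by
  set n := L + 1 + 2*p with hn
  set k := 2*q + 1 with hk
  set c : ℝ := 1 - (2*q + 1 : ℝ)/(L + 2) with hcdef
  have hL2 : (0:ℝ) < (L:ℝ) + 2 := by positivity
  have hkcast : (k:ℝ) = 2*(q:ℝ) + 1 := by rw [hk]; push_cast; ring
  have h1c : (1:ℝ) - c = (2*(q:ℝ) + 1)/((L:ℝ) + 2) := by rw [hcdef]; ring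
  have hc0 : 0 ≤ c := by
    rw [hcdef, sub_nonneg, div_le_one hL2]
    have : (2*q : ℕ) + 1 ≤ L + 1 := by omega
    have h' : (2*(q:ℝ)) + 1 ≤ (L:ℝ) + 1 := by exact_mod_cast this
    linarith
  have h1c0 : (0:ℝ) ≤ 1 - c := by rw [h1c]; positivity
  have key : ∀ m, m ≤ 2*q → (n.choose k : ℝ) * c ^ m ≤ ((n - m).choose k : ℝ) := by
    intro m
    induction m with
    | zero => simp
    | succ m ih =>
      intro hm
      have ihm := ih (by omega)
      have hkN : k ≤ n - m := by omega
      have hN : 0 < n - m := by omega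
      have hNL : (L:ℝ) + 2 ≤ ((n - m : ℕ) : ℝ) := by
        have : L + 2 ≤ n - m := by omega
        exact_mod_cast this
      have hcmul : c * ((n - m : ℕ) : ℝ) ≤ ((n - m : ℕ) : ℝ) - k := by
        have hmul : (0:ℝ) ≤ (1 - c) * (((n - m : ℕ) : ℝ) - ((L:ℝ) + 2)) :=
          mul_nonneg h1c0 (by linarith)
        have hkval : (k:ℝ) = (1 - c) * ((L:ℝ) + 2) := by
          rw [hkcast, h1c]; field_simp
        nlinarith
      have step := aux9 (n - m) k hkN hN c hc0 hcmul
      have hsub : n - m - 1 = n - (m + 1) := by omega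
      rw [hsub] at step
      calc (n.choose k : ℝ) * c ^ (m + 1) = (n.choose k : ℝ) * c ^ m * c := by ring
        _ ≤ ((n - m).choose k : ℝ) * c := mul_le_mul_of_nonneg_right ihm hc0
        _ ≤ ((n - (m+1)).choose k : ℝ) := step
  exact key (2*q) le_rfl
end

section
/- Define sinh_l(X) = sum over q with 2q < l of X^{2q+1}/(2q+1)! * (1 - (2q+1)/(l+1))^{2q}, for X > 0 and integer l >= 1. Then X <= sinh_l(X) <= sinh(X) and 1 <= sinh_l'(X) <= cosh(X). -/
/-- `sinh_l(X) = ∑_{2q<l} X^{2q+1}/(2q+1)! (1-(2q+1)/(l+1))^{2q}`. -/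
noncomputable def sinhl (l : ℕ) (X : ℝ) : ℝ :=
  ∑ q ∈ Finset.range l, if 2*q < l then
    X ^ (2*q + 1) / (2*q + 1).factorial * (1 - (2*q + 1 : ℝ)/(l + 1)) ^ (2*q)
  else 0

lemma coeff_nonneg (l q : ℕ) (h : 2*q < l) :
    (0:ℝ) ≤ (1 - (2*q + 1 : ℝ)/(l + 1)) := by
  have h1 : (2*q + 1 : ℝ) ≤ (l : ℝ) + 1 := by
    have : (2*q + 1 : ℕ) ≤ l + 1 := by omega
    exact_mod_cast this
  have hl1 : (0:ℝ) < (l:ℝ) + 1 := by positivity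
  rw [sub_nonneg, div_le_one hl1]
  exact h1

lemma coeff_le_one (l q : ℕ) :
    (1 - (2*q + 1 : ℝ)/(l + 1)) ≤ 1 := by
  have hl1 : (0:ℝ) < (l:ℝ) + 1 := by positivity
  have : (0:ℝ) ≤ (2*q + 1 : ℝ)/(l + 1) := by positivity
  linarith

lemma sinhl_hasDerivAt (l : ℕ) (X : ℝ) :
    HasDerivAt (sinhl l)
      (∑ q ∈ Finset.range l, if 2*q < l then
        X ^ (2*q) / (2*q).factorial * (1 - (2*q + 1 : ℝ)/(l + 1)) ^ (2*q)
      else 0) X := by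
  unfold sinhl
  apply HasDerivAt.fun_sum
  intro q _
  by_cases h : 2*q < l
  · simp only [h, if_true]
    have h1 : HasDerivAt (fun X : ℝ => X ^ (2*q+1))
        ((2*q+1 : ℕ) * X ^ (2*q)) X := by
      simpa using hasDerivAt_pow (2*q+1) X
    have h2 := (h1.div_const ((2*q + 1).factorial : ℝ)).mul_const
      ((1 - (2*q + 1 : ℝ)/(l + 1)) ^ (2*q))
    refine h2.congr_deriv ?_
    have hfac : ((2*q + 1).factorial : ℝ) = (2*q+1 : ℕ) * ((2*q).factorial : ℝ) := by
      rw [Nat.factorial_succ]; push_cast; ring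
    rw [hfac]
    have : ((2*q).factorial : ℝ) ≠ 0 := by positivity
    field_simp
  · simp only [h, if_false]
    exact hasDerivAt_const X 0

/-- For `X > 0` and `l ≥ 1`: `X ≤ sinh_l(X) ≤ sinh(X)` and
`1 ≤ sinh_l'(X) ≤ cosh(X)`. -/
theorem stmt10 (l : ℕ) (hl : 1 ≤ l) (X : ℝ) (hX : 0 < X) :
    X ≤ sinhl l X ∧ sinhl l X ≤ Real.sinh X ∧
    1 ≤ deriv (sinhl l) X ∧ deriv (sinhl l) X ≤ Real.cosh X := by
  have hterm_nonneg : ∀ q, 2*q < l →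
      (0:ℝ) ≤ X ^ (2*q + 1) / (2*q + 1).factorial * (1 - (2*q + 1 : ℝ)/(l + 1)) ^ (2*q) := by
    intro q h
    have := coeff_nonneg l q h
    positivity
  have hc : ∀ q, 2*q < l → (1 - (2*q + 1 : ℝ)/(l + 1)) ^ (2*q) ≤ 1 := by
    intro q h
    exact pow_le_one₀ (coeff_nonneg l q h) (coeff_le_one l q)
  refine ⟨?_, ?_, ?_, ?_⟩
  · -- X ≤ sinhl
    unfold sinhl
    have h0 : (0:ℕ) ∈ Finset.range l := by simp; omega
    have key : X ≤ (if 2*0 < l then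
        X ^ (2*0 + 1) / (2*0 + 1).factorial * (1 - (2*0 + 1 : ℝ)/(l + 1)) ^ (2*0)
      else 0) := by
      have h0l : 2*0 < l := by omega
      simp [h0l, show 0 < l by omega]
    refine le_trans key (Finset.single_le_sum (f := fun q => if 2*q < l then
        X ^ (2*q + 1) / (2*q + 1).factorial * (1 - (2*q + 1 : ℝ)/(l + 1)) ^ (2*q)
      else 0) ?_ h0)
    intro i _
    by_cases h : 2*i < l
    · simp only [h, if_true]; exact hterm_nonneg i h
    · simp [h]
  · -- sinhl ≤ sinh
    unfold sinhl
    have hsum := X.hasSum_sinh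
    have hle : ∀ q ∈ Finset.range l, (if 2*q < l then
        X ^ (2*q + 1) / (2*q + 1).factorial * (1 - (2*q + 1 : ℝ)/(l + 1)) ^ (2*q)
      else 0) ≤ X ^ (2*q + 1) / (2*q + 1).factorial := by
      intro q _
      by_cases h : 2*q < l
      · simp only [h, if_true]
        have hx : (0:ℝ) ≤ X ^ (2*q + 1) / (2*q + 1).factorial := by positivity
        calc X ^ (2*q + 1) / (2*q + 1).factorial * (1 - (2*q + 1 : ℝ)/(l + 1)) ^ (2*q)
            ≤ X ^ (2*q + 1) / (2*q + 1).factorial * 1 := by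
              exact mul_le_mul_of_nonneg_left (hc q h) hx
          _ = X ^ (2*q + 1) / (2*q + 1).factorial := by ring
      · simp only [h, if_false]; positivity
    refine le_trans (Finset.sum_le_sum hle) ?_
    refine sum_le_hasSum (Finset.range l) (fun q _ => by positivity) hsum
  · -- 1 ≤ deriv
    rw [(sinhl_hasDerivAt l X).deriv]
    have h0 : (0:ℕ) ∈ Finset.range l := by simp; omega
    have key : (1:ℝ) ≤ (if 2*0 < l then
        X ^ (2*0) / (2*0).factorial * (1 - (2*0 + 1 : ℝ)/(l + 1)) ^ (2*0)
      else 0) := by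
      have h0l : 2*0 < l := by omega
      simp [h0l, show 0 < l by omega]
    refine le_trans key (Finset.single_le_sum (f := fun q => if 2*q < l then
        X ^ (2*q) / (2*q).factorial * (1 - (2*q + 1 : ℝ)/(l + 1)) ^ (2*q)
      else 0) ?_ h0)
    intro i _
    by_cases h : 2*i < l
    · simp only [h, if_true]
      have := coeff_nonneg l i h
      positivity
    · simp [h]
  · -- deriv ≤ cosh
    rw [(sinhl_hasDerivAt l X).deriv]
    have hsum := X.hasSum_cosh
    have hle : ∀ q ∈ Finset.range l, (if 2*q < l then
        X ^ (2*q) / (2*q).factorial * (1 - (2*q + 1 : ℝ)/(l + 1)) ^ (2*q)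
      else 0) ≤ X ^ (2*q) / (2*q).factorial := by
      intro q _
      by_cases h : 2*q < l
      · simp only [h, if_true]
        have hx : (0:ℝ) ≤ X ^ (2*q) / (2*q).factorial := by positivity
        calc X ^ (2*q) / (2*q).factorial * (1 - (2*q + 1 : ℝ)/(l + 1)) ^ (2*q)
            ≤ X ^ (2*q) / (2*q).factorial * 1 :=
              mul_le_mul_of_nonneg_left (hc q h) hx
          _ = X ^ (2*q) / (2*q).factorial := by ring
      · simp only [h, if_false]; positivity
    refine le_trans (Finset.sum_le_sum hle) ?_
    refine sum_le_hasSum (Finset.range l) (fun q _ => by positivity) hsum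
end

section
/- Let g_L(X) = product over l from 1 to L of sinh_l(X), where sinh_l(X) = sum over q with 2q < l of X^{2q+1}/(2q+1)! * (1 - (2q+1)/(l+1))^{2q}. Then for every fixed X > 0, g_L(X)^{1/L} converges to sinh(X) as L tends to infinity. -/
open Filter

noncomputable def sinhlTerm (l q : ℕ) (X : ℝ) : ℝ :=
  if 2*q < l then
    X ^ (2*q + 1) / (2*q + 1).factorial * (1 - (2*q + 1 : ℝ)/(l + 1)) ^ (2*q)
  else 0

lemma sinhlTerm_nonneg {X : ℝ} (hX : 0 < X) (l q : ℕ) : 0 ≤ sinhlTerm l q X := by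
  unfold sinhlTerm
  split
  · apply mul_nonneg
    · positivity
    · exact Even.pow_nonneg (even_two_mul q) _
  · exact le_refl 0

lemma sinhlTerm_le {X : ℝ} (hX : 0 < X) (l q : ℕ) :
    sinhlTerm l q X ≤ X ^ (2*q + 1) / (2*q + 1).factorial := by
  unfold sinhlTerm
  split
  · rename_i h
    have h1 : (0:ℝ) ≤ 1 - (2*q + 1 : ℝ)/(l + 1) := by
      rw [sub_nonneg, div_le_one (by positivity)]
      have : (2*q + 1 : ℕ) ≤ l + 1 := by omega
      exact_mod_cast this
    have h2 : (1 - (2*q + 1 : ℝ)/(l + 1)) ≤ 1 := by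
      have : (0:ℝ) ≤ (2*q + 1 : ℝ)/(l + 1) := by positivity
      linarith
    calc X ^ (2*q + 1) / (2*q + 1).factorial * (1 - (2*q + 1 : ℝ)/(l + 1)) ^ (2*q)
        ≤ X ^ (2*q + 1) / (2*q + 1).factorial * 1 := by
          apply mul_le_mul_of_nonneg_left _ (by positivity)
          exact pow_le_one₀ h1 h2
      _ = X ^ (2*q + 1) / (2*q + 1).factorial := mul_one _
  · positivity

lemma sinhl_eq_tsum (l : ℕ) (X : ℝ) : sinhl l X = ∑' q, sinhlTerm l q X := by
  rw [tsum_eq_sum (s := Finset.range l)]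
  · rfl
  · intro q hq
    simp only [Finset.mem_range, not_lt] at hq
    unfold sinhlTerm
    rw [if_neg (by omega)]

lemma sinhl_pos {X : ℝ} (hX : 0 < X) {l : ℕ} (hl : 1 ≤ l) : 0 < sinhl l X := by
  unfold sinhl
  apply Finset.sum_pos' (fun q _ => sinhlTerm_nonneg hX l q)
  refine ⟨0, Finset.mem_range.2 (by omega), ?_⟩
  unfold sinhlTerm
  rw [if_pos (by omega)]
  simp [hX]

lemma sinhl_tendsto {X : ℝ} (hX : 0 < X) :
    Tendsto (fun l => sinhl l X) atTop (nhds (Real.sinh X)) := by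
  have hsum : HasSum (fun q : ℕ => X ^ (2*q + 1) / (2*q + 1).factorial) (Real.sinh X) :=
    Real.hasSum_sinh X
  have : Tendsto (fun l => ∑' q, sinhlTerm l q X) atTop
      (nhds (∑' q, X ^ (2*q + 1) / (2*q + 1).factorial)) := by
    apply tendsto_tsum_of_dominated_convergence hsum.summable
    · intro q
      have h1 : Tendsto (fun l : ℕ => (2*q + 1 : ℝ)/(l + 1)) atTop (nhds 0) := by
        apply Tendsto.div_atTop tendsto_const_nhds
        exact tendsto_atTop_add_const_right _ _ tendsto_natCast_atTop_atTop
      have h2 : Tendsto (fun l : ℕ =>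
          X ^ (2*q + 1) / (2*q + 1).factorial * (1 - (2*q + 1 : ℝ)/(l + 1)) ^ (2*q))
          atTop (nhds (X ^ (2*q + 1) / (2*q + 1).factorial)) := by
        have h3 : Tendsto (fun l : ℕ => (1 - (2*q + 1 : ℝ)/(l + 1)) ^ (2*q))
            atTop (nhds ((1 - 0 : ℝ) ^ (2*q))) :=
          (tendsto_const_nhds.sub h1).pow (2*q)
        have h4 := h3.const_mul (X ^ (2*q + 1) / ((2*q + 1).factorial : ℝ))
        simpa using h4
      apply h2.congr'
      filter_upwards [eventually_gt_atTop (2*q)] with l hl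
      rw [sinhlTerm, if_pos hl]
    · filter_upwards with l q
      rw [Real.norm_of_nonneg (sinhlTerm_nonneg hX l q)]
      exact sinhlTerm_le hX l q
  rw [hsum.tsum_eq] at this
  exact this.congr fun l => (sinhl_eq_tsum l X).symm

/-- With `g_L(X) = ∏_{l=1}^L sinh_l(X)`, for fixed `X > 0`,
`g_L(X)^{1/L} → sinh(X)` as `L → ∞`. -/
theorem stmt11 (X : ℝ) (hX : 0 < X) :
    Tendsto (fun L : ℕ => (∏ l ∈ Finset.Icc 1 L, sinhl l X) ^ ((1:ℝ)/L))
      atTop (nhds (Real.sinh X)) := by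
  have hprod_pos : ∀ L : ℕ, 0 < ∏ l ∈ Finset.Icc 1 L, sinhl l X := fun L =>
    Finset.prod_pos fun l hl => sinhl_pos hX (Finset.mem_Icc.1 hl).1
  have hlog : Tendsto (fun l : ℕ => Real.log (sinhl (l+1) X)) atTop
      (nhds (Real.log (Real.sinh X))) := by
    have := (sinhl_tendsto hX).comp (tendsto_add_atTop_nat 1)
    exact this.log (Real.sinh_pos_iff.2 hX).ne'
  have hces := hlog.cesaro
  have hsum_eq : ∀ L : ℕ, Real.log (∏ l ∈ Finset.Icc 1 L, sinhl l X)
      = ∑ i ∈ Finset.range L, Real.log (sinhl (i+1) X) := by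
    intro L
    rw [Real.log_prod (fun l hl => (sinhl_pos hX (Finset.mem_Icc.1 hl).1).ne')]
    rw [show Finset.Icc 1 L = Finset.Ico 1 (L+1) by rfl,
      Finset.sum_Ico_eq_sum_range]
    simp [add_comm]
  have key : Tendsto (fun L : ℕ => ((L:ℝ)⁻¹ *
      Real.log (∏ l ∈ Finset.Icc 1 L, sinhl l X))) atTop
      (nhds (Real.log (Real.sinh X))) := by
    apply hces.congr
    intro L
    rw [hsum_eq]
  have hexp := (Real.continuous_exp.tendsto (Real.log (Real.sinh X))).comp key
  rw [Function.comp_def, Real.exp_log (Real.sinh_pos_iff.2 hX)] at hexp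
  apply hexp.congr
  intro L
  rw [Real.rpow_def_of_pos (hprod_pos L), one_div, mul_comm]
end

section
/- Define polynomials phi_L by phi_1(X) = X and phi_{L+1}(X) = ((1+X)/2) phi_L(X + X^2) - ((1-X)/2) phi_L(X - X^2). Then the degree d_L of phi_L satisfies d_L = (2^{L+1} - 1)/3 if L is odd and d_L = (2^{L+1} - 2)/3 if L is even. -/
open Polynomial

/-- `φ_1(X) = X`,
`φ_{L+1}(X) = ((1+X)/2) φ_L(X+X²) - ((1-X)/2) φ_L(X-X²)`. -/
noncomputable def phi : ℕ → Polynomial ℚ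
  | 0 => 0
  | 1 => X
  | (L+2) => C (1/2) * (1 + X) * (phi (L+1)).comp (X + X^2)
           - C (1/2) * (1 - X) * (phi (L+1)).comp (X - X^2)

set_option maxRecDepth 8000

/-- The recursion operator. -/
noncomputable def psi (p : Polynomial ℚ) : Polynomial ℚ :=
  C (1/2) * (1 + X) * p.comp (X + X^2) - C (1/2) * (1 - X) * p.comp (X - X^2)

lemma phi_succ (L : ℕ) : phi (L+2) = psi (phi (L+1)) := rfl

/-- The odd part of `(1+X)^m`. -/
noncomputable def S (m : ℕ) : Polynomial ℚ := C (1/2 : ℚ) * ((1 + X)^m - (1 - X)^m)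

lemma coeff_one_sub_X_pow (m j : ℕ) :
    ((1 - X : Polynomial ℚ)^m).coeff j = (-1)^j * (m.choose j : ℚ) := by
  have h : (1 - X : Polynomial ℚ)^m = (-X + 1)^m := by ring
  rw [h, add_pow, finset_sum_coeff]
  have hterm : ∀ k ∈ Finset.range (m+1),
      ((-X : Polynomial ℚ)^k * 1^(m-k) * (m.choose k : Polynomial ℚ)).coeff j
        = if k = j then (-1)^j * (m.choose j : ℚ) else 0 := by
    intro k _
    have : ((-X : Polynomial ℚ)^k * 1^(m-k) * (m.choose k : Polynomial ℚ))
        = C ((-1)^k * (m.choose k : ℚ)) * X^k := by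
      rw [map_mul, map_pow, map_neg, map_one, map_natCast]
      ring
    rw [this, coeff_C_mul, coeff_X_pow]
    rcases eq_or_ne k j with rfl | hkj
    · simp
    · simp [hkj, Ne.symm hkj]
  rw [Finset.sum_congr rfl hterm, Finset.sum_ite_eq']
  split_ifs with h
  · rfl
  · have : m.choose j = 0 := Nat.choose_eq_zero_of_lt (by simpa using h)
    simp [this]

lemma coeff_S (m j : ℕ) :
    (S m).coeff j = if Odd j then (m.choose j : ℚ) else 0 := by
  rw [S, coeff_C_mul, coeff_sub, coeff_one_add_X_pow, coeff_one_sub_X_pow]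
  rcases Nat.even_or_odd j with h | h
  · rw [h.neg_one_pow, if_neg (Nat.not_odd_iff_even.mpr h)]; ring
  · rw [h.neg_one_pow, if_pos h]; ring

lemma psi_zero : psi 0 = 0 := by simp [psi]

lemma psi_add (p q : Polynomial ℚ) : psi (p + q) = psi p + psi q := by
  simp only [psi, add_comp]; ring

lemma psi_monomial (k : ℕ) (c : ℚ) :
    psi (monomial k c) = C c * (X^k * S (k+1)) := by
  have h1 : (X + X^2 : Polynomial ℚ) = X * (1 + X) := by ring
  have h2 : (X - X^2 : Polynomial ℚ) = X * (1 - X) := by ring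
  rw [psi, monomial_comp, monomial_comp, h1, h2, mul_pow, mul_pow, S]
  ring

lemma psi_sum {ι : Type*} (s : Finset ι) (f : ι → Polynomial ℚ) :
    psi (∑ i ∈ s, f i) = ∑ i ∈ s, psi (f i) := by
  classical
  induction s using Finset.induction with
  | empty => simpa using psi_zero
  | @insert a s h ih => rw [Finset.sum_insert h, Finset.sum_insert h, psi_add, ih]

lemma coeff_psi (p : Polynomial ℚ) (n : ℕ) :
    (psi p).coeff n = ∑ k ∈ p.support, p.coeff k *
      (if k ≤ n ∧ Odd (n - k) then (((k+1).choose (n-k)) : ℚ) else 0) := by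
  conv_lhs => rw [p.as_sum_support, psi_sum, finset_sum_coeff]
  refine Finset.sum_congr rfl fun k _ => ?_
  rw [psi_monomial, coeff_C_mul, coeff_X_pow_mul', coeff_S]
  congr 1
  split_ifs with h1 h2 h3 h3 <;> first | rfl | (exfalso; tauto)

lemma psi_step {p : Polynomial ℚ} (hnn : ∀ n, 0 ≤ p.coeff n)
    (hd : 0 < p.coeff p.natDegree) (T : ℕ)
    (hT : T = if Odd p.natDegree then 2 * p.natDegree else 2 * p.natDegree + 1) :
    (psi p).natDegree = T ∧ (∀ n, 0 ≤ (psi p).coeff n) ∧ 0 < (psi p).coeff T := by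
  set d := p.natDegree with hdef
  have hnonneg : ∀ n, 0 ≤ (psi p).coeff n := by
    intro n
    rw [coeff_psi]
    refine Finset.sum_nonneg fun k _ => mul_nonneg (hnn k) ?_
    split_ifs <;> positivity
  have hvanish : ∀ n, T < n → (psi p).coeff n = 0 := by
    intro n hn
    rw [coeff_psi]
    refine Finset.sum_eq_zero fun k hk => ?_
    have hkd : k ≤ d := le_natDegree_of_mem_supp k hk
    split_ifs with h
    · obtain ⟨hkn, hodd⟩ := h
      have hodd' : (n - k) % 2 = 1 := Nat.odd_iff.mp hodd
      have hlt : k + 1 < n - k := by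
        rcases Nat.even_or_odd d with he | ho
        · have : ¬ Odd d := Nat.not_odd_iff_even.mpr he
          rw [if_neg this] at hT
          omega
        · have hd2 : d % 2 = 1 := Nat.odd_iff.mp ho
          rw [if_pos ho] at hT
          omega
      rw [Nat.choose_eq_zero_of_lt hlt]
      simp
    · simp
  have hpos : 0 < (psi p).coeff T := by
    rw [coeff_psi]
    have hdT : d ≤ T := by split_ifs at hT <;> omega
    have hoddT : Odd (T - d) := by
      rcases Nat.even_or_odd d with he | ho
      · rw [if_neg (Nat.not_odd_iff_even.mpr he)] at hT
        have : T - d = d + 1 := by omega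
        rw [this]; exact he.add_one
      · rw [if_pos ho] at hT
        have : T - d = d := by omega
        rw [this]; exact ho
    have hmem : d ∈ p.support := mem_support_iff.mpr hd.ne'
    refine Finset.sum_pos' (fun k _ => mul_nonneg (hnn k) (by split_ifs <;> positivity))
      ⟨d, hmem, ?_⟩
    rw [if_pos ⟨hdT, hoddT⟩]
    have hle : T - d ≤ d + 1 := by split_ifs at hT <;> omega
    have := Nat.choose_pos hle
    positivity
  refine ⟨le_antisymm ?_ (le_natDegree_of_ne_zero hpos.ne'), hnonneg, hpos⟩
  exact natDegree_le_iff_coeff_eq_zero.mpr hvanish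

lemma pow2_mod12 : ∀ L : ℕ, 1 ≤ L → 2^(L+1) % 12 = if Odd L then 4 else 8 := by
  intro L hL
  induction L with
  | zero => omega
  | succ M ih =>
    rcases Nat.eq_or_lt_of_le hL with h1 | h1
    · simp [← h1]
    · have hM : 1 ≤ M := by omega
      have := ih hM
      have hp : 2^(M+1+1) = 2 * 2^(M+1) := by ring
      rcases Nat.even_or_odd M with he | ho
      · rw [if_neg (Nat.not_odd_iff_even.mpr he)] at this
        rw [if_pos (he.add_one), hp]
        omega
      · rw [if_pos ho] at this
        rw [if_neg (by simpa using ho.add_one), hp]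
        omega

/-- The degree values. -/
def D (L : ℕ) : ℕ := if Odd L then (2^(L+1) - 1)/3 else (2^(L+1) - 2)/3

lemma main : ∀ N : ℕ, (phi (N+1)).natDegree = D (N+1)
    ∧ (∀ n, 0 ≤ (phi (N+1)).coeff n) ∧ 0 < (phi (N+1)).coeff (D (N+1)) := by
  intro N
  induction N with
  | zero =>
    have h1 : phi 1 = X := rfl
    have hD : D 1 = 1 := by simp [D]
    rw [h1, hD]
    refine ⟨natDegree_X, fun n => ?_, by simp⟩
    rw [coeff_X]
    split_ifs <;> norm_num
  | succ N ih =>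
    obtain ⟨hdeg, hnn, hpos⟩ := ih
    rw [phi_succ]
    have hdeg' : 0 < (phi (N+1)).coeff (phi (N+1)).natDegree := by rw [hdeg]; exact hpos
    have ha := pow2_mod12 (N+1) (by omega)
    have hb := pow2_mod12 (N+2) (by omega)
    have hp : (2:ℕ)^(N+3) = 2 * 2^(N+2) := by ring
    have hT : D (N+2) = if Odd (phi (N+1)).natDegree
        then 2 * (phi (N+1)).natDegree else 2 * (phi (N+1)).natDegree + 1 := by
      rw [hdeg]
      rcases Nat.even_or_odd (N+1) with he | ho
      · have ho2 : Odd (N+2) := by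
          rw [Nat.odd_iff]; rw [Nat.even_iff] at he; omega
        rw [if_neg (Nat.not_odd_iff_even.mpr he)] at ha
        rw [if_pos ho2] at hb
        have ha' : 2^(N+2) % 12 = 8 := ha
        have hb' : 2^(N+3) % 12 = 4 := hb
        have hD1 : D (N+1) = (2^(N+2) - 2)/3 := by
          rw [D, if_neg (Nat.not_odd_iff_even.mpr he)]
        have hD2 : D (N+2) = (2^(N+3) - 1)/3 := by
          rw [D, if_pos ho2]
        have heven : ¬ Odd (D (N+1)) := by
          rw [Nat.not_odd_iff, hD1]; omega
        rw [if_neg heven, hD1, hD2]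
        omega
      · have he2 : ¬ Odd (N+2) := by
          rw [Nat.not_odd_iff]; rw [Nat.odd_iff] at ho; omega
        rw [if_pos ho] at ha
        rw [if_neg he2] at hb
        have ha' : 2^(N+2) % 12 = 4 := ha
        have hb' : 2^(N+3) % 12 = 8 := hb
        have hD1 : D (N+1) = (2^(N+2) - 1)/3 := by rw [D, if_pos ho]
        have hD2 : D (N+2) = (2^(N+3) - 2)/3 := by
          rw [D, if_neg he2]
        have hodd : Odd (D (N+1)) := by
          rw [Nat.odd_iff, hD1]; omega
        rw [if_pos hodd, hD1, hD2]
        omega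
    exact psi_step hnn hdeg' (D (N+2)) hT

/-- The degree `d_L` of `φ_L` equals `(2^{L+1}-1)/3` for odd `L` and
`(2^{L+1}-2)/3` for even `L`. -/
theorem stmt16 (L : ℕ) (hL : 1 ≤ L) :
    (phi L).natDegree = if Odd L then (2^(L+1) - 1)/3 else (2^(L+1) - 2)/3 := by
  obtain ⟨N, rfl⟩ : ∃ N, L = N + 1 := ⟨L - 1, by omega⟩
  have := (main N).1
  rwa [D] at this
end

section
/- Let a_L be the number of self-avoiding paths from (0,...,0) to (1,...,1) on the L-hypercube. Then (ln ln a_L)/L converges to ln 2 as L tends to infinity; more precisely there exist positive constants c, c' such that for L large enough, c <= (ln a_L)/2^L <= c' ln L. -/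
open Filter

/-- `a L`: total number of self-avoiding paths (of any length) from all-zeros
to all-ones on the `L`-hypercube. -/
noncomputable def totalSAPaths (L : ℕ) : ℕ :=
  Nat.card (Σ n : ℕ, {f : Fin (n+1) → Fin L → Bool //
    IsSAPath n f ∧ f 0 = (fun _ => false) ∧ f (Fin.last n) = (fun _ => true)})

namespace Stmt17

def PathType (L : ℕ) (u v : Fin L → Bool) : Type :=
  Σ n : ℕ, {f : Fin (n+1) → Fin L → Bool //
    IsSAPath n f ∧ f 0 = u ∧ f (Fin.last n) = v}

noncomputable def pathCount (L : ℕ) (u v : Fin L → Bool) : ℕ := Nat.card (PathType L u v)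

lemma totalSAPaths_eq (L : ℕ) :
    totalSAPaths L = pathCount L (fun _ => false) (fun _ => true) := rfl

lemma adj_step {L : ℕ} {u v : Fin L → Bool} (h : HypercubeAdj u v) :
    v = Function.update u h.choose (! u h.choose) := by
  obtain ⟨hne, huniq⟩ := h.choose_spec
  funext j
  rcases eq_or_ne j h.choose with rfl | hj
  · simp only [Function.update_self]
    cases hu : u h.choose <;> cases hv : v h.choose <;>
      first | rfl | exact absurd (hu.trans hv.symm) hne
  · have hj' : ¬ (u j ≠ v j) := fun hh => hj (huniq j hh)
    rw [Function.update_of_ne hj]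
    exact (not_ne_iff.1 hj').symm

lemma path_eq_of_steps {L n : ℕ} {f g : Fin (n+1) → Fin L → Bool}
    (hf : ∀ i : Fin n, HypercubeAdj (f i.castSucc) (f i.succ))
    (hg : ∀ i : Fin n, HypercubeAdj (g i.castSucc) (g i.succ))
    (h0 : f 0 = g 0)
    (hs : ∀ i : Fin n, (hf i).choose = (hg i).choose) : f = g := by
  funext k
  induction k using Fin.induction with
  | zero => exact h0
  | succ i ih =>
      rw [adj_step (hf i), adj_step (hg i), hs i, ih]

noncomputable def code {L : ℕ} {u v : Fin L → Bool} (P : PathType L u v) :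
    Σ n : Fin (2^L), (Fin n.1 → Fin L) :=
  ⟨⟨P.1, by
      have h := Fintype.card_le_of_injective _ P.2.2.1.1
      simp only [Fintype.card_fin, Fintype.card_fun, Fintype.card_bool] at h
      omega⟩,
   fun i => (P.2.2.1.2 i).choose⟩

lemma code_injective {L : ℕ} (u v : Fin L → Bool) :
    Function.Injective (code (L := L) (u := u) (v := v)) := by
  rintro ⟨n₁, f₁, hp₁, h0₁, hl₁⟩ ⟨n₂, f₂, hp₂, h0₂, hl₂⟩ h
  obtain ⟨hn, hs⟩ := Sigma.mk.inj_iff.1 h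
  have hn' : n₁ = n₂ := congrArg Fin.val hn
  subst hn'
  have hs' := eq_of_heq hs
  have hf : f₁ = f₂ := by
    refine path_eq_of_steps hp₁.2 hp₂.2 (h0₁.trans h0₂.symm) fun i => ?_
    exact congrFun hs' i
  subst hf
  rfl

instance pathTypeFinite (L : ℕ) (u v : Fin L → Bool) : Finite (PathType L u v) :=
  Finite.of_injective _ (code_injective u v)

lemma pathCount_le (L : ℕ) (hL : 1 ≤ L) (u v : Fin L → Bool) :
    pathCount L u v ≤ 2^L * L^(2^L) := by
  have h1 : pathCount L u v ≤ Nat.card (Σ n : Fin (2^L), (Fin n.1 → Fin L)) :=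
    Nat.card_le_card_of_injective _ (code_injective u v)
  rw [Nat.card_eq_fintype_card, Fintype.card_sigma] at h1
  refine h1.trans ?_
  calc ∑ n : Fin (2^L), Fintype.card (Fin n.1 → Fin L)
      ≤ ∑ _n : Fin (2^L), L^(2^L) := by
        refine Finset.sum_le_sum fun n _ => ?_
        simp only [Fintype.card_fun, Fintype.card_fin]
        exact Nat.pow_le_pow_right hL (le_of_lt n.isLt)
    _ = 2^L * L^(2^L) := by simp [Finset.sum_const, mul_comm]


-- adjacency lemmas
lemma adj_insertNth {L : ℕ} (i : Fin (L+1)) (b : Bool) {y y' : Fin L → Bool}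
    (h : HypercubeAdj y y') :
    HypercubeAdj (i.insertNth b y) (i.insertNth b y') := by
  obtain ⟨j, hj, huniq⟩ := h
  refine ⟨i.succAbove j, ?_, ?_⟩
  · simpa [Fin.insertNth_apply_succAbove] using hj
  · intro j' hj'
    have hne : j' ≠ i := by
      rintro rfl; simp [Fin.insertNth_apply_same] at hj'
    obtain ⟨j'', rfl⟩ := Fin.exists_succAbove_eq hne
    have hy : y j'' ≠ y' j'' := by
      simpa [Fin.insertNth_apply_succAbove] using hj'
    exact congrArg _ (huniq j'' hy)

lemma adj_insertNth_flip {L : ℕ} (i : Fin (L+1)) (b : Bool) (x : Fin L → Bool) :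
    HypercubeAdj (i.insertNth b x) (i.insertNth (!b) x) := by
  refine ⟨i, ?_, ?_⟩
  · simp [Fin.insertNth_apply_same]
  · intro j' hj'
    by_contra hne
    obtain ⟨j'', rfl⟩ := Fin.exists_succAbove_eq hne
    simp [Fin.insertNth_apply_succAbove] at hj'

def glueFun {L n m : ℕ} (i : Fin (L+1)) (b : Bool)
    (p : Fin (n+1) → Fin L → Bool) (q : Fin (m+1) → Fin L → Bool) :
    Fin (n+m+1+1) → Fin (L+1) → Bool :=
  fun k => if h : (k : ℕ) < n+1 then i.insertNth b (p ⟨k, h⟩)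
    else i.insertNth (!b) (q ⟨(k:ℕ) - (n+1), by have := k.isLt; omega⟩)

lemma glueFun_apply_lt {L n m : ℕ} (i : Fin (L+1)) (b : Bool)
    (p : Fin (n+1) → Fin L → Bool) (q : Fin (m+1) → Fin L → Bool)
    {k : Fin (n+m+1+1)} (hk : (k : ℕ) < n+1) :
    glueFun i b p q k = i.insertNth b (p ⟨k, hk⟩) := dif_pos hk

lemma glueFun_apply_ge {L n m : ℕ} (i : Fin (L+1)) (b : Bool)
    (p : Fin (n+1) → Fin L → Bool) (q : Fin (m+1) → Fin L → Bool)
    {k : Fin (n+m+1+1)} (hk : ¬ (k : ℕ) < n+1) :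
    glueFun i b p q k
      = i.insertNth (!b) (q ⟨(k:ℕ) - (n+1), by have := k.isLt; omega⟩) := dif_neg hk

lemma insertNth_inj {L : ℕ} {i : Fin (L+1)} {b : Bool} {y y' : Fin L → Bool}
    (h : i.insertNth (α := fun _ => Bool) b y = i.insertNth b y') : y = y' := by
  have := congrArg i.removeNth h
  simpa [Fin.removeNth_insertNth] using this

lemma glueFun_isSAPath {L n m : ℕ} (i : Fin (L+1)) (b : Bool)
    {p : Fin (n+1) → Fin L → Bool} {q : Fin (m+1) → Fin L → Bool}
    (hp : IsSAPath n p) (hq : IsSAPath m q) (hx : p (Fin.last n) = q 0) :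
    IsSAPath (n+m+1) (glueFun i b p q) := by
  obtain ⟨hpinj, hpadj⟩ := hp
  obtain ⟨hqinj, hqadj⟩ := hq
  constructor
  · -- injectivity
    intro k₁ k₂ hk
    rcases lt_or_ge (k₁ : ℕ) (n+1) with h₁ | h₁ <;>
      rcases lt_or_ge (k₂ : ℕ) (n+1) with h₂ | h₂
    · rw [glueFun_apply_lt i b p q h₁, glueFun_apply_lt i b p q h₂] at hk
      have := congrArg Fin.val (hpinj (insertNth_inj hk))
      exact Fin.ext this
    · rw [glueFun_apply_lt i b p q h₁,
        glueFun_apply_ge i b p q (not_lt.2 h₂)] at hk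
      have := congrFun hk i
      simp [Fin.insertNth_apply_same] at this
    · rw [glueFun_apply_ge i b p q (not_lt.2 h₁),
        glueFun_apply_lt i b p q h₂] at hk
      have := congrFun hk i
      simp [Fin.insertNth_apply_same] at this
    · rw [glueFun_apply_ge i b p q (not_lt.2 h₁),
        glueFun_apply_ge i b p q (not_lt.2 h₂)] at hk
      have := congrArg Fin.val (hqinj (insertNth_inj hk))
      simp only at this
      have hk₁ := k₁.isLt
      have hk₂ := k₂.isLt
      exact Fin.ext (by omega)
  · -- adjacency
    intro k
    have hkv : (k.castSucc : ℕ) = (k : ℕ) := rfl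
    have hks : (k.succ : ℕ) = (k : ℕ) + 1 := rfl
    have hklt := k.isLt
    rcases lt_trichotomy (k : ℕ) n with hlt | heq | hgt
    · rw [glueFun_apply_lt i b p q (k := k.castSucc) (by omega),
        glueFun_apply_lt i b p q (k := k.succ) (by omega)]
      have h := adj_insertNth i b (hpadj ⟨k, hlt⟩)
      have e1 : ((⟨(k : ℕ), hlt⟩ : Fin n).castSucc) = (⟨(k.castSucc : ℕ), by omega⟩ : Fin (n+1)) :=
        Fin.ext (by simp [hkv])
      have e2 : ((⟨(k : ℕ), hlt⟩ : Fin n).succ) = (⟨(k.succ : ℕ), by omega⟩ : Fin (n+1)) :=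
        Fin.ext (by simp [hks])
      rw [e1, e2] at h
      exact h
    · rw [glueFun_apply_lt i b p q (k := k.castSucc) (by omega),
        glueFun_apply_ge i b p q (k := k.succ) (by omega)]
      have e1 : (⟨(k.castSucc : ℕ), by omega⟩ : Fin (n+1)) = Fin.last n :=
        Fin.ext (by simp [hkv, heq])
      have e2 : (⟨(k.succ : ℕ) - (n+1), by have := k.succ.isLt; omega⟩ : Fin (m+1)) = 0 :=
        Fin.ext (by simp [hks, heq])
      rw [e1, e2, hx]
      exact adj_insertNth_flip i b (q 0)
    · rw [glueFun_apply_ge i b p q (k := k.castSucc) (by omega),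
        glueFun_apply_ge i b p q (k := k.succ) (by omega)]
      have h := adj_insertNth i (!b) (hqadj ⟨(k : ℕ) - (n+1), by omega⟩)
      have e1 : ((⟨(k : ℕ) - (n+1), by omega⟩ : Fin m).castSucc)
          = (⟨(k.castSucc : ℕ) - (n+1), by have := k.castSucc.isLt; omega⟩ : Fin (m+1)) :=
        Fin.ext (by simp [hkv])
      have e2 : ((⟨(k : ℕ) - (n+1), by omega⟩ : Fin m).succ)
          = (⟨(k.succ : ℕ) - (n+1), by have := k.succ.isLt; omega⟩ : Fin (m+1)) :=
        Fin.ext (by simp [hks]; omega)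
      rw [e1, e2] at h
      exact h

lemma glueFun_zero {L n m : ℕ} (i : Fin (L+1)) (b : Bool)
    (p : Fin (n+1) → Fin L → Bool) (q : Fin (m+1) → Fin L → Bool) :
    glueFun i b p q 0 = i.insertNth b (p 0) := by
  rw [glueFun_apply_lt i b p q (k := 0) (by simp)]
  have e : (⟨((0 : Fin (n+m+1+1)) : ℕ), by simp⟩ : Fin (n+1)) = 0 := Fin.ext (by simp)
  rw [e]

lemma glueFun_last {L n m : ℕ} (i : Fin (L+1)) (b : Bool)
    (p : Fin (n+1) → Fin L → Bool) (q : Fin (m+1) → Fin L → Bool) :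
    glueFun i b p q (Fin.last (n+m+1)) = i.insertNth (!b) (q (Fin.last m)) := by
  rw [glueFun_apply_ge i b p q (k := Fin.last (n+m+1)) (by simp)]
  have e : (⟨((Fin.last (n+m+1) : Fin (n+m+1+1)) : ℕ) - (n+1), by simp⟩ : Fin (m+1))
      = Fin.last m := Fin.ext (by simp only [Fin.val_last]; omega)
  rw [e]

noncomputable def glue {L : ℕ} (i : Fin (L+1)) (b : Bool) (u₀ v₀ x : Fin L → Bool)
    (P : PathType L u₀ x) (Q : PathType L x v₀) :
    PathType (L+1) (i.insertNth b u₀) (i.insertNth (!b) v₀) :=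
  ⟨P.1 + Q.1 + 1, glueFun i b P.2.1 Q.2.1,
    glueFun_isSAPath i b P.2.2.1 Q.2.2.1 (P.2.2.2.2.trans Q.2.2.2.1.symm),
    by rw [glueFun_zero, P.2.2.2.1],
    by rw [glueFun_last, Q.2.2.2.2]⟩

lemma glueFun_aux_not_lt {L n m n' m' : ℕ} (i : Fin (L+1)) (b : Bool)
    {p : Fin (n+1) → Fin L → Bool} {q : Fin (m+1) → Fin L → Bool}
    {p' : Fin (n'+1) → Fin L → Bool} {q' : Fin (m'+1) → Fin L → Bool}
    (hvl : List.ofFn (glueFun i b p q) = List.ofFn (glueFun i b p' q'))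
    (hlt : n < n') : False := by
  have hlen : n+m+1+1 = n'+m'+1+1 := by
    simpa using congrArg List.length hvl
  have h1 : (List.ofFn (glueFun i b p q))[n+1]'(by simp)
      = (List.ofFn (glueFun i b p' q'))[n+1]'(by simp; omega) := by simp only [hvl]
  rw [List.getElem_ofFn, List.getElem_ofFn] at h1
  rw [glueFun_apply_ge i b p q (show ¬ n+1 < n+1 by omega),
    glueFun_apply_lt i b p' q' (show n+1 < n'+1 by omega)] at h1
  have h2 := congrFun h1 i
  simp [Fin.insertNth_apply_same] at h2

lemma glueFun_ofFn_inj {L n m n' m' : ℕ} (i : Fin (L+1)) (b : Bool)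
    {p : Fin (n+1) → Fin L → Bool} {q : Fin (m+1) → Fin L → Bool}
    {p' : Fin (n'+1) → Fin L → Bool} {q' : Fin (m'+1) → Fin L → Bool}
    (hvl : List.ofFn (glueFun i b p q) = List.ofFn (glueFun i b p' q')) :
    ∃ (_ : n = n') (_ : m = m'), HEq p p' ∧ HEq q q' := by
  have hn : n = n' := by
    rcases lt_trichotomy n n' with h | h | h
    · exact absurd (glueFun_aux_not_lt i b hvl h) not_false
    · exact h
    · exact absurd (glueFun_aux_not_lt i b hvl.symm h) not_false
  subst hn
  have hm : m = m' := by
    have hlen : n+m+1+1 = n+m'+1+1 := by simpa using congrArg List.length hvl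
    omega
  subst hm
  have hfun : glueFun i b p q = glueFun i b p' q' := List.ofFn_injective hvl
  refine ⟨rfl, rfl, heq_of_eq ?_, heq_of_eq ?_⟩
  · funext k
    have h1 := congrFun hfun ⟨(k : ℕ), by have := k.isLt; omega⟩
    rw [glueFun_apply_lt i b p q (show (k:ℕ) < n+1 from k.isLt),
      glueFun_apply_lt i b p' q' (show (k:ℕ) < n+1 from k.isLt)] at h1
    have h2 := insertNth_inj h1
    simpa [Fin.eta] using h2
  · funext k
    have h1 := congrFun hfun ⟨n+1+(k : ℕ), by have := k.isLt; omega⟩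
    rw [glueFun_apply_ge i b p q (show ¬ n+1+(k:ℕ) < n+1 by omega),
      glueFun_apply_ge i b p' q' (show ¬ n+1+(k:ℕ) < n+1 by omega)] at h1
    have h2 := insertNth_inj h1
    have e : (⟨n+1+(k:ℕ) - (n+1), by have := k.isLt; omega⟩ : Fin (m+1)) = k :=
      Fin.ext (by simp)
    rwa [e] at h2

lemma glue_inj {L : ℕ} (i : Fin (L+1)) (b : Bool) (u₀ v₀ : Fin L → Bool)
    {x x' : Fin L → Bool} {P : PathType L u₀ x} {Q : PathType L x v₀}
    {P' : PathType L u₀ x'} {Q' : PathType L x' v₀}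
    (h : glue i b u₀ v₀ x P Q = glue i b u₀ v₀ x' P' Q') :
    x = x' ∧ HEq (P, Q) (P', Q') := by
  obtain ⟨n, p, hp⟩ := P
  obtain ⟨m, q, hq⟩ := Q
  obtain ⟨n', p', hp'⟩ := P'
  obtain ⟨m', q', hq'⟩ := Q'
  have hvl : List.ofFn (glueFun i b p q) = List.ofFn (glueFun i b p' q') :=
    congrArg
      (fun R : PathType (L+1) (i.insertNth b u₀) (i.insertNth (!b) v₀) =>
        List.ofFn R.2.1) h
  obtain ⟨hn, hm, hpe, hqe⟩ := glueFun_ofFn_inj i b hvl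
  subst hn; subst hm
  have hpp : p = p' := eq_of_heq hpe
  have hqq : q = q' := eq_of_heq hqe
  subst hpp; subst hqq
  have hx : x = x' := hp.2.2.symm.trans hp'.2.2
  subst hx
  refine ⟨rfl, heq_of_eq ?_⟩
  refine Prod.ext_iff.2 ?_
  exact ⟨congrArg (Sigma.mk n) (Subtype.ext rfl), congrArg (Sigma.mk m) (Subtype.ext rfl)⟩

lemma sum_le_pathCount {L : ℕ} (i : Fin (L+1)) (b : Bool)
    (u₀ v₀ x₁ x₂ : Fin L → Bool) (hx : x₁ ≠ x₂) :
    pathCount L u₀ x₁ * pathCount L x₁ v₀ + pathCount L u₀ x₂ * pathCount L x₂ v₀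
      ≤ pathCount (L+1) (i.insertNth b u₀) (i.insertNth (!b) v₀) := by
  classical
  set F : (PathType L u₀ x₁ × PathType L x₁ v₀) ⊕ (PathType L u₀ x₂ × PathType L x₂ v₀) →
      PathType (L+1) (i.insertNth b u₀) (i.insertNth (!b) v₀) :=
    Sum.elim (fun z => glue i b u₀ v₀ x₁ z.1 z.2) (fun z => glue i b u₀ v₀ x₂ z.1 z.2)
    with hF
  have hinj : Function.Injective F := by
    rintro (⟨P, Q⟩ | ⟨P, Q⟩) (⟨P', Q'⟩ | ⟨P', Q'⟩) h <;>
      simp only [hF, Sum.elim_inl, Sum.elim_inr] at h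
    · exact congrArg Sum.inl (eq_of_heq (glue_inj i b u₀ v₀ h).2)
    · exact absurd (glue_inj i b u₀ v₀ h).1 hx
    · exact absurd (glue_inj i b u₀ v₀ h).1 hx.symm
    · exact congrArg Sum.inr (eq_of_heq (glue_inj i b u₀ v₀ h).2)
  have hcard := Nat.card_le_card_of_injective F hinj
  rwa [Nat.card_sum, Nat.card_prod, Nat.card_prod] at hcard

def trivialPath {L : ℕ} (u : Fin L → Bool) : PathType L u u :=
  ⟨0, fun _ => u, ⟨fun a b _ => Fin.ext (by have := a.isLt; have := b.isLt; omega), fun i => i.elim0⟩, rfl, rfl⟩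

lemma nonempty_pathType : ∀ (L : ℕ) (u v : Fin L → Bool), Nonempty (PathType L u v) := by
  intro L
  induction L with
  | zero =>
      intro u v
      have : u = v := funext fun j => j.elim0
      subst this
      exact ⟨trivialPath u⟩
  | succ K IH =>
      intro u v
      by_cases huv : u = v
      · subst huv; exact ⟨trivialPath u⟩
      · obtain ⟨i, hi⟩ := Function.ne_iff.1 huv
        have e1 : i.insertNth (u i) (i.removeNth u) = u :=
          Fin.insertNth_self_removeNth i u
        have hvi : v i = !(u i) := by
          cases hc : u i <;> cases hc2 : v i <;> simp_all
        have e2 : i.insertNth (!(u i)) (i.removeNth v) = v := by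
          rw [← hvi]; exact Fin.insertNth_self_removeNth i v
        obtain ⟨R⟩ := IH (i.removeNth u) (i.removeNth v)
        refine ⟨?_⟩
        rw [← e1, ← e2]
        exact glue i (u i) (i.removeNth u) (i.removeNth v) (i.removeNth u)
          (trivialPath (i.removeNth u)) R

lemma one_le_pathCount (L : ℕ) (u v : Fin L → Bool) : 1 ≤ pathCount L u v := by
  have := nonempty_pathType L u v
  exact Nat.card_pos

lemma lower_bound : ∀ (L : ℕ) (u v : Fin (L+1) → Bool), u ≠ v →
    2^(2^(L+1)/4) ≤ pathCount (L+1) u v := by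
  intro L
  induction L with
  | zero => intro u v _; simpa using one_le_pathCount 1 u v
  | succ K IH =>
      intro u v huv
      obtain ⟨i, hi⟩ := Function.ne_iff.1 huv
      set u₀ := i.removeNth u with hu₀
      set v₀ := i.removeNth v with hv₀
      have e1 : i.insertNth (u i) u₀ = u := by
        rw [hu₀]; exact Fin.insertNth_self_removeNth i u
      have hvi : v i = !(u i) := by
        cases hc : u i <;> cases hc2 : v i <;> simp_all
      have e2 : i.insertNth (!(u i)) v₀ = v := by
        rw [← hvi, hv₀]; exact Fin.insertNth_self_removeNth i v
      rw [← e1, ← e2]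
      rcases Nat.eq_zero_or_pos K with rfl | hK
      · -- dimension 2, inner dimension 1
        have hx : u₀ ≠ (fun j => !(u₀ j)) := by
          intro hh
          have := congrFun hh 0
          simp at this
        have h2 : (2:ℕ)^(2^(0+1+1)/4) = 2 := by norm_num
        rw [h2]
        have hA : 1 * 1 ≤ pathCount 1 u₀ u₀ * pathCount 1 u₀ v₀ :=
          Nat.mul_le_mul (one_le_pathCount _ _ _) (one_le_pathCount _ _ _)
        have hB : 1 * 1 ≤ pathCount 1 u₀ (fun j => !(u₀ j))
            * pathCount 1 (fun j => !(u₀ j)) v₀ :=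
          Nat.mul_le_mul (one_le_pathCount _ _ _) (one_le_pathCount _ _ _)
        calc (2:ℕ) = 1 * 1 + 1 * 1 := by norm_num
          _ ≤ _ := add_le_add hA hB
          _ ≤ _ := sum_le_pathCount i (u i) u₀ v₀ u₀ (fun j => !(u₀ j)) hx
      · -- inner dimension K+1 ≥ 2
        obtain ⟨x₁, hx₁, x₂, hx₂, hxx⟩ :
            ∃ x₁ ∈ ({u₀, v₀}ᶜ : Finset (Fin (K+1) → Bool)),
              ∃ x₂ ∈ ({u₀, v₀}ᶜ : Finset (Fin (K+1) → Bool)), x₁ ≠ x₂ := by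
          apply Finset.one_lt_card.1
          have hcompl := Finset.card_compl ({u₀, v₀} : Finset (Fin (K+1) → Bool))
          have hcard2 : ({u₀, v₀} : Finset (Fin (K+1) → Bool)).card ≤ 2 :=
            Finset.card_insert_le _ _ |>.trans (by simp)
          have hbig : 4 ≤ Fintype.card (Fin (K+1) → Bool) := by
            rw [Fintype.card_fun, Fintype.card_bool, Fintype.card_fin]
            calc (4:ℕ) = 2^2 := by norm_num
              _ ≤ 2^(K+1) := Nat.pow_le_pow_right (by norm_num) (by omega)
          omega
        simp only [Finset.mem_compl, Finset.mem_insert, Finset.mem_singleton, not_or]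
          at hx₁ hx₂
        set g0 := 2^(2^(K+1)/4) with hg0
        have b1 : g0 ≤ pathCount (K+1) u₀ x₁ := IH u₀ x₁ (fun hh => hx₁.1 hh.symm)
        have b2 : g0 ≤ pathCount (K+1) x₁ v₀ := IH x₁ v₀ hx₁.2
        have b3 : g0 ≤ pathCount (K+1) u₀ x₂ := IH u₀ x₂ (fun hh => hx₂.1 hh.symm)
        have b4 : g0 ≤ pathCount (K+1) x₂ v₀ := IH x₂ v₀ hx₂.2
        have hpow : 2^(2^(K+1+1)/4) ≤ g0 * g0 + g0 * g0 := by
          rw [hg0, ← pow_add]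
          have heq : 2^(2^(K+1)/4 + 2^(K+1)/4) + 2^(2^(K+1)/4 + 2^(K+1)/4)
              = 2^(2^(K+1)/4 + 2^(K+1)/4 + 1) := by rw [pow_succ]; ring
          rw [heq]
          apply Nat.pow_le_pow_right (by norm_num)
          -- 2^(K+2)/4 ≤ 2*(2^(K+1)/4) + 1
          obtain ⟨K', rfl⟩ := Nat.exists_eq_add_of_le hK
          have e3 : 2^(1+K'+1)/4 = 2^K' := by
            rw [show 1+K'+1 = K'+2 by omega, pow_succ, pow_succ]
            omega
          have e4 : 2^(1+K'+1+1)/4 = 2^(K'+1) := by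
            rw [show 1+K'+1+1 = K'+1+2 by omega, pow_succ, pow_succ]
            omega
          rw [e3, e4, pow_succ]
          omega
        calc 2^(2^(K+1+1)/4) ≤ g0 * g0 + g0 * g0 := hpow
          _ ≤ pathCount (K+1) u₀ x₁ * pathCount (K+1) x₁ v₀
              + pathCount (K+1) u₀ x₂ * pathCount (K+1) x₂ v₀ :=
            add_le_add (Nat.mul_le_mul b1 b2) (Nat.mul_le_mul b3 b4)
          _ ≤ _ := sum_le_pathCount i (u i) u₀ v₀ x₁ x₂ hxx

lemma nat_bounds (M : ℕ) :
    2^(2^M) ≤ totalSAPaths (M+2) ∧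
      totalSAPaths (M+2) ≤ 2^(M+2) * (M+2)^(2^(M+2)) := by
  constructor
  · have hne : (fun _ => false : Fin (M+2) → Bool) ≠ (fun _ => true) := by
      intro hh
      exact absurd (congrFun hh ⟨0, by omega⟩) (by simp)
    have h := lower_bound (M+1) _ _ hne
    rw [totalSAPaths_eq]
    have e : 2^(M+1+1)/4 = 2^M := by rw [pow_succ, pow_succ]; omega
    rwa [e] at h
  · rw [totalSAPaths_eq]
    exact pathCount_le (M+2) (by omega) _ _

lemma real_bounds (M : ℕ) :
    (2:ℝ)^(M+2) * (Real.log 2 / 4) ≤ Real.log (totalSAPaths (M+2)) ∧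
      Real.log (totalSAPaths (M+2)) ≤ (2:ℝ)^(M+2) * (2 * Real.log ((M:ℝ)+2)) := by
  obtain ⟨h1, h2⟩ := nat_bounds M
  have hc1 : (2:ℝ)^(2^M) ≤ (totalSAPaths (M+2) : ℝ) := by exact_mod_cast h1
  have hc2 : (totalSAPaths (M+2) : ℝ) ≤ (2:ℝ)^(M+2) * ((M:ℝ)+2)^(2^(M+2)) := by
    exact_mod_cast h2
  have hpos : (0:ℝ) < (2:ℝ)^(2^M) := by positivity
  constructor
  · have hlog := Real.log_le_log hpos hc1
    rw [Real.log_pow] at hlog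
    have e : (2:ℝ)^(M+2) * (Real.log 2 / 4) = (2^M : ℕ) * Real.log 2 := by
      push_cast
      rw [pow_succ, pow_succ]
      ring
    rw [e]
    exact hlog
  · have hlog := Real.log_le_log (lt_of_lt_of_le hpos hc1) hc2
    rw [Real.log_mul (by positivity) (by positivity), Real.log_pow, Real.log_pow] at hlog
    refine hlog.trans ?_
    have hA : ((M:ℝ)+2) * Real.log 2 ≤ (2:ℝ)^(M+2) * Real.log ((M:ℝ)+2) := by
      have l1 : Real.log 2 ≤ Real.log ((M:ℝ)+2) :=
        Real.log_le_log (by norm_num) (by push_cast; linarith [Nat.cast_nonneg (α := ℝ) M])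
      have l2 : ((M:ℝ)+2) ≤ (2:ℝ)^(M+2) := by
        have := Nat.lt_two_pow_self (n := M+2)
        have := (Nat.cast_lt (α := ℝ)).2 this
        push_cast at this
        linarith
      exact mul_le_mul l2 l1 (Real.log_nonneg (by norm_num)) (by positivity)
    have ecast : ((M+2 : ℕ) : ℝ) = (M:ℝ)+2 := by push_cast; ring
    have ecast2 : ((2^(M+2) : ℕ) : ℝ) = (2:ℝ)^(M+2) := by push_cast; ring
    rw [ecast, ecast2]
    linarith

lemma log_nat_div_tendsto :
    Tendsto (fun L : ℕ => Real.log L / L) atTop (nhds 0) := by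
  have h := Real.isLittleO_log_id_atTop.tendsto_div_nhds_zero
  have := h.comp (tendsto_natCast_atTop_atTop (R := ℝ))
  exact this

end Stmt17

/-- `(ln ln a_L)/L → ln 2`; more precisely there are constants `c, c' > 0` with
`c ≤ (ln a_L)/2^L ≤ c' ln L` for `L` large enough. -/
theorem stmt17 :
    Tendsto (fun L : ℕ => Real.log (Real.log (totalSAPaths L)) / L)
      atTop (nhds (Real.log 2)) ∧
    ∃ c c' : ℝ, 0 < c ∧ 0 < c' ∧ ∀ᶠ L : ℕ in atTop,
      c ≤ Real.log (totalSAPaths L) / 2^L ∧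
      Real.log (totalSAPaths L) / 2^L ≤ c' * Real.log L := by
  have hlog2 : (0:ℝ) < Real.log 2 := Real.log_pos (by norm_num)
  constructor
  · -- the tendsto part
    have hlo : Tendsto (fun L : ℕ => Real.log 2 + Real.log (Real.log 2 / 4) / L) atTop
        (nhds (Real.log 2)) := by
      have h := (tendsto_const_nhds (x := Real.log 2) (f := atTop (α := ℕ))).add
        (tendsto_const_div_atTop_nhds_zero_nat (Real.log (Real.log 2 / 4)))
      simpa using h
    have hhi : Tendsto
        (fun L : ℕ => Real.log 2 + (Real.log 2 / L + Real.log L / L)) atTop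
        (nhds (Real.log 2)) := by
      have h := (tendsto_const_nhds (x := Real.log 2) (f := atTop (α := ℕ))).add
        ((tendsto_const_div_atTop_nhds_zero_nat (Real.log 2)).add
          Stmt17.log_nat_div_tendsto)
      simpa using h
    refine tendsto_of_tendsto_of_tendsto_of_le_of_le' hlo hhi ?_ ?_
    · filter_upwards [eventually_ge_atTop 2] with L hL
      obtain ⟨M, rfl⟩ := Nat.exists_eq_add_of_le hL
      have hb := Stmt17.real_bounds M
      rw [show M+2 = 2+M by omega] at hb
      set A : ℝ := ((totalSAPaths (2+M) : ℕ) : ℝ) with hA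
      have hpos2 : (0:ℝ) < (2:ℝ)^(2+M) * (Real.log 2/4) :=
        mul_pos (by positivity) (by linarith)
      have hlogA : (0:ℝ) < Real.log A := lt_of_lt_of_le hpos2 hb.1
      have hLpos : (0:ℝ) < ((2+M : ℕ) : ℝ) := by positivity
      have key : ((2+M:ℕ):ℝ) * Real.log 2 + Real.log (Real.log 2/4)
          ≤ Real.log (Real.log A) := by
        have h1 := Real.log_le_log hpos2 hb.1
        rw [Real.log_mul (by positivity) (by linarith), Real.log_pow] at h1
        push_cast at h1 ⊢
        linarith
      calc Real.log 2 + Real.log (Real.log 2/4) / ((2+M:ℕ):ℝ)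
          = (((2+M:ℕ):ℝ) * Real.log 2 + Real.log (Real.log 2/4)) / ((2+M:ℕ):ℝ) := by
            field_simp
        _ ≤ Real.log (Real.log A) / ((2+M:ℕ):ℝ) := by gcongr
    · filter_upwards [eventually_ge_atTop 2] with L hL
      obtain ⟨M, rfl⟩ := Nat.exists_eq_add_of_le hL
      have hb := Stmt17.real_bounds M
      rw [show M+2 = 2+M by omega] at hb
      set A : ℝ := ((totalSAPaths (2+M) : ℕ) : ℝ) with hA
      have hpos2 : (0:ℝ) < (2:ℝ)^(2+M) * (Real.log 2/4) :=
        mul_pos (by positivity) (by linarith)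
      have hlogA : (0:ℝ) < Real.log A := lt_of_lt_of_le hpos2 hb.1
      have hLpos : (0:ℝ) < ((2+M : ℕ) : ℝ) := by positivity
      have ecast : ((M:ℝ)+2) = ((2+M : ℕ) : ℝ) := by push_cast; ring
      have hlogL : (0:ℝ) < Real.log ((2+M:ℕ):ℝ) := by
        apply Real.log_pos
        push_cast
        linarith [Nat.cast_nonneg (α := ℝ) M]
      have key : Real.log (Real.log A)
          ≤ ((2+M:ℕ):ℝ) * Real.log 2 + Real.log 2 + Real.log ((2+M:ℕ):ℝ) := by
        have hup : Real.log A ≤ (2:ℝ)^(2+M) * (2 * Real.log ((2+M:ℕ):ℝ)) := by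
          rw [← ecast]; exact hb.2
        have h1 := Real.log_le_log hlogA hup
        rw [Real.log_mul (by positivity) (by positivity), Real.log_pow,
          Real.log_mul (by norm_num) (ne_of_gt hlogL)] at h1
        have h2 : Real.log (Real.log ((2+M:ℕ):ℝ)) ≤ Real.log ((2+M:ℕ):ℝ) := by
          apply Real.log_le_log hlogL
          have := Real.log_le_sub_one_of_pos hLpos
          linarith
        push_cast at h1 h2 ⊢
        linarith
      calc Real.log (Real.log A) / ((2+M:ℕ):ℝ)
          ≤ (((2+M:ℕ):ℝ) * Real.log 2 + Real.log 2 + Real.log ((2+M:ℕ):ℝ))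
              / ((2+M:ℕ):ℝ) := by gcongr
        _ = Real.log 2 + (Real.log 2 / ((2+M:ℕ):ℝ) + Real.log ((2+M:ℕ):ℝ) / ((2+M:ℕ):ℝ)) := by
            field_simp
            ring
  · refine ⟨Real.log 2 / 4, 2, by linarith, by norm_num, ?_⟩
    filter_upwards [eventually_ge_atTop 2] with L hL
    obtain ⟨M, rfl⟩ := Nat.exists_eq_add_of_le hL
    have hb := Stmt17.real_bounds M
    rw [show M+2 = 2+M by omega] at hb
    have hpow : (0:ℝ) < (2:ℝ)^(2+M) := by positivity
    constructor
    · rw [le_div_iff₀ hpow, mul_comm]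
      exact hb.1
    · rw [div_le_iff₀ hpow]
      have ecast : ((M:ℝ)+2) = ((2+M : ℕ) : ℝ) := by push_cast; ring
      rw [← ecast]
      calc Real.log (totalSAPaths (2+M)) ≤ (2:ℝ)^(2+M) * (2 * Real.log ((M:ℝ)+2)) := hb.2
        _ = 2 * Real.log ((M:ℝ)+2) * 2^(2+M) := by ring
end
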